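/- arXiv:2308.10267 — 4 statements merged into one kernel-verified Lean document; each statement's English description precedes it below -/
import Mathlib

section
/- Let k and d be positive integers, let c₁, c₂ ∈ [0,1] be such that c₁·d < k, and set c₃ := c₁(1−c₂)/2. Let G be a finite graph on more than k vertices with maximum degree at most d such that every S ⊆ V(G) with |S| = k satisfies ∂_G(S) ≥ c₁·d·k. Then there exists a subset V' ⊆ V(G) with |V'| ≥ |V(G)| − k such that the induced subgraph G' = G[V'] satisfies: every nonempty S ⊆ V' with |S| ≤ c₃·k has ∂_{G'}(S) ≥ c₁·c₂·d·|S|. -/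
open scoped Classical in
/-- The probability that the percolated random subgraph `G_p` satisfies property `A`. -/
noncomputable def percProb {V : Type} [Fintype V] (G : SimpleGraph V) (p : ℝ)
    (A : SimpleGraph V → Prop) : ℝ :=
  ∑ F ∈ G.edgeFinset.powerset,
    if A (SimpleGraph.fromEdgeSet (F : Set (Sym2 V))) then
      p ^ F.card * (1 - p) ^ (G.edgeFinset.card - F.card)
    else 0

/-- The number of edges of `G` with exactly one endpoint in `S`. -/
noncomputable def edgeBoundary {V : Type} (G : SimpleGraph V) (S : Set V) : ℕ :=
  {e : Sym2 V | e ∈ G.edgeSet ∧ ∃ a b, e = s(a, b) ∧ a ∈ S ∧ b ∉ S}.ncard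

/-- Edges of `G` from `S` to `W \ S`. -/
def bdryIn {V : Type} (G : SimpleGraph V) (W S : Set V) : Set (Sym2 V) :=
  {e : Sym2 V | e ∈ G.edgeSet ∧ ∃ a b, e = s(a, b) ∧ a ∈ S ∧ b ∈ W ∧ b ∉ S}

lemma edgeBoundary_eq_bdryIn {V : Type} (G : SimpleGraph V) (S : Set V) :
    edgeBoundary G S = (bdryIn G Set.univ S).ncard := by
  unfold edgeBoundary bdryIn
  congr 1
  ext e
  simp

lemma edgeBoundary_induce {V : Type} (G : SimpleGraph V) (V' : Set V) (S : Set V') :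
    edgeBoundary (G.induce V') S = (bdryIn G V' (Subtype.val '' S)).ncard := by
  unfold edgeBoundary bdryIn
  rw [← Set.ncard_image_of_injective _ (Sym2.map.injective (Subtype.val_injective))]
  congr 1
  ext e
  constructor
  · rintro ⟨e', ⟨he', a, b, rfl, haS, hbS⟩, rfl⟩
    refine ⟨?_, a, b, rfl, ⟨a, haS, rfl⟩, b.2, ?_⟩
    · exact (SimpleGraph.mem_edgeSet _).2 (((SimpleGraph.mem_edgeSet _).1 he' : G.Adj a b))
    · rintro ⟨b', hb'S, hbb⟩
      exact hbS ((Subtype.val_injective hbb) ▸ hb'S)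
  · rintro ⟨he, a, b, rfl, ⟨a', ha'S, rfl⟩, hbV, hbS⟩
    refine ⟨s(a', ⟨b, hbV⟩), ⟨?_, a', ⟨b, hbV⟩, rfl, ha'S, ?_⟩, rfl⟩
    · exact (SimpleGraph.mem_edgeSet _).2 ((SimpleGraph.mem_edgeSet _).1 he)
    · intro hb
      exact hbS ⟨⟨b, hbV⟩, hb, rfl⟩

lemma bdryIn_finite {V : Type} [Fintype V] (G : SimpleGraph V) (W S : Set V) :
    (bdryIn G W S).Finite := Set.toFinite _

lemma bdryIn_union_le {V : Type} [Fintype V] (G : SimpleGraph V) (B S : Set V) :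
    (bdryIn G Set.univ (B ∪ S)).ncard ≤
      (bdryIn G Set.univ B).ncard + (bdryIn G Bᶜ S).ncard := by
  refine le_trans (Set.ncard_le_ncard ?_ ((bdryIn_finite G _ B).union (bdryIn_finite G _ S)))
    (Set.ncard_union_le _ _)
  rintro e ⟨he, a, b, rfl, haBS, -, hbBS⟩
  rcases haBS with haB | haS
  · exact Or.inl ⟨he, a, b, rfl, haB, Set.mem_univ _, fun hb => hbBS (Or.inl hb)⟩
  · exact Or.inr ⟨he, a, b, rfl, haS, fun hb => hbBS (Or.inl hb), fun hb => hbBS (Or.inr hb)⟩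

lemma bdryIn_insert_le {V : Type} [Fintype V] (G : SimpleGraph V) (B : Set V) (v : V)
    (d : ℕ) (hdeg : (G.neighborSet v).ncard ≤ d) :
    (bdryIn G Set.univ (insert v B)).ncard ≤ (bdryIn G Set.univ B).ncard + d := by
  classical
  have hsub : bdryIn G Set.univ (insert v B) ⊆ bdryIn G Set.univ B ∪ G.incidenceSet v := by
    rintro e ⟨he, a, b, rfl, haB, -, hbB⟩
    rcases haB with rfl | haB
    · exact Or.inr ⟨he, Sym2.mem_mk_left _ _⟩
    · exact Or.inl ⟨he, a, b, rfl, haB, Set.mem_univ _, fun hb => hbB (Or.inr hb)⟩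
  have hinc : (G.incidenceSet v).ncard ≤ d := by
    rw [← Nat.card_coe_set_eq, Nat.card_congr (G.incidenceSetEquivNeighborSet v),
      Nat.card_coe_set_eq]
    exact hdeg
  calc (bdryIn G Set.univ (insert v B)).ncard
      ≤ (bdryIn G Set.univ B ∪ G.incidenceSet v).ncard :=
        Set.ncard_le_ncard hsub ((bdryIn_finite G _ B).union (Set.toFinite _))
    _ ≤ (bdryIn G Set.univ B).ncard + (G.incidenceSet v).ncard := Set.ncard_union_le _ _
    _ ≤ (bdryIn G Set.univ B).ncard + d := by omega

lemma grow {V : Type} [Fintype V] (G : SimpleGraph V) (d k : ℕ)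
    (hdeg : ∀ v : V, (G.neighborSet v).ncard ≤ d) (hcard : k < Fintype.card V) :
    ∀ n (B : Set V), B.ncard + n = k →
      ∃ T, B ⊆ T ∧ T.ncard = k ∧
        (bdryIn G Set.univ T).ncard ≤ (bdryIn G Set.univ B).ncard + d * n := by
  intro n
  induction n with
  | zero => intro B hB; exact ⟨B, subset_rfl, by omega, by omega⟩
  | succ n ih =>
    intro B hB
    have hBne : B ≠ Set.univ := by
      intro h
      rw [h, Set.ncard_univ, Nat.card_eq_fintype_card] at hB
      omega
    obtain ⟨v, hv⟩ : ∃ v, v ∉ B := by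
      by_contra h
      push_neg at h
      exact hBne (Set.eq_univ_of_forall h)
    have hins : (insert v B).ncard = B.ncard + 1 := Set.ncard_insert_of_notMem hv
    obtain ⟨T, hBT, hTk, hTb⟩ := ih (insert v B) (by omega)
    refine ⟨T, subset_trans (Set.subset_insert _ _) hBT, hTk, ?_⟩
    have := bdryIn_insert_le G B v d (hdeg v)
    calc (bdryIn G Set.univ T).ncard ≤ (bdryIn G Set.univ (insert v B)).ncard + d * n := hTb
      _ ≤ (bdryIn G Set.univ B).ncard + d + d * n := by omega
      _ = (bdryIn G Set.univ B).ncard + d * (n + 1) := by ring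

lemma main_rec {V : Type} [Fintype V] (G : SimpleGraph V) (d k : ℕ)
    (c₁ c₂ : ℝ) (hd : 0 < d)
    (hc₁0 : 0 ≤ c₁) (hc₂0 : 0 ≤ c₂) (hc₂1 : c₂ ≤ 1)
    (hcc : c₁ * c₂ < 1)
    (hcard : k < Fintype.card V)
    (hdeg : ∀ v : V, (G.neighborSet v).ncard ≤ d)
    (hiso : ∀ S : Set V, S.ncard = k →
      c₁ * (d : ℝ) * (k : ℝ) ≤ ((bdryIn G Set.univ S).ncard : ℝ)) :
    ∀ m (B : Set V), Fintype.card V - B.ncard ≤ m → B.ncard ≤ k →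
      ((bdryIn G Set.univ B).ncard : ℝ) ≤ c₁ * c₂ * d * B.ncard →
      ∃ C : Set V, C.ncard ≤ k ∧
        ∀ S : Set V, S ⊆ Cᶜ → S.Nonempty → (S.ncard : ℝ) ≤ c₁ * (1 - c₂) / 2 * k →
          c₁ * c₂ * d * S.ncard ≤ ((bdryIn G Cᶜ S).ncard : ℝ) := by
  intro m
  induction m with
  | zero =>
    intro B hm hBk _
    have hB : B.ncard ≤ Fintype.card V := by
      have := Set.ncard_le_ncard (Set.subset_univ B) (Set.toFinite _)
      rwa [Set.ncard_univ, Nat.card_eq_fintype_card] at this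
    omega
  | succ m ih =>
    intro B hm hBk hinv
    by_cases h : ∀ S : Set V, S ⊆ Bᶜ → S.Nonempty → (S.ncard : ℝ) ≤ c₁ * (1 - c₂) / 2 * k →
        c₁ * c₂ * d * S.ncard ≤ ((bdryIn G Bᶜ S).ncard : ℝ)
    · exact ⟨B, hBk, h⟩
    push_neg at h
    obtain ⟨S, hSB, hSne, hSsmall, hSbad⟩ := h
    have hdisj : Disjoint B S := (Set.subset_compl_iff_disjoint_left.1 hSB)
    have hcardU : (B ∪ S).ncard = B.ncard + S.ncard := Set.ncard_union_eq hdisj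
    have hS1 : 1 ≤ S.ncard := (Set.ncard_pos (Set.toFinite _)).2 hSne
    -- size bound on B from the expansion hypothesis
    obtain ⟨T, hBT, hTk, hTb⟩ := grow G d k hdeg hcard (k - B.ncard) B (by omega)
    have hTreal : (((bdryIn G Set.univ T).ncard : ℝ)) ≤
        ((bdryIn G Set.univ B).ncard : ℝ) + (d : ℝ) * ((k : ℝ) - (B.ncard : ℝ)) := by
      calc ((bdryIn G Set.univ T).ncard : ℝ)
          ≤ (((bdryIn G Set.univ B).ncard + d * (k - B.ncard) : ℕ) : ℝ) := by exact_mod_cast hTb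
        _ = ((bdryIn G Set.univ B).ncard : ℝ) + (d : ℝ) * ((k : ℝ) - (B.ncard : ℝ)) := by
            push_cast [Nat.cast_sub hBk]; ring
    have hkey : c₁ * d * k ≤ c₁ * c₂ * d * B.ncard + (d : ℝ) * ((k : ℝ) - (B.ncard : ℝ)) :=
      le_trans (hiso T hTk) (le_trans hTreal (by linarith))
    have hdpos : (0 : ℝ) < d := by exact_mod_cast hd
    have hBle : (B.ncard : ℝ) * (1 - c₁ * c₂) ≤ (k : ℝ) * (1 - c₁) := by
      nlinarith
    -- the new set is still small
    have hnewR : ((B ∪ S).ncard : ℝ) ≤ (k : ℝ) := by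
      rw [hcardU]
      push_cast
      nlinarith [mul_nonneg (mul_nonneg hc₁0 (sub_nonneg.2 hc₂1)) (mul_nonneg hc₁0 hc₂0),
        mul_nonneg hc₁0 hc₂0]
    have hnewk : (B ∪ S).ncard ≤ k := by exact_mod_cast hnewR
    have hinv' : ((bdryIn G Set.univ (B ∪ S)).ncard : ℝ) ≤ c₁ * c₂ * d * (B ∪ S).ncard := by
      have h3 := bdryIn_union_le G B S
      have h3R : ((bdryIn G Set.univ (B ∪ S)).ncard : ℝ) ≤
          ((bdryIn G Set.univ B).ncard : ℝ) + ((bdryIn G Bᶜ S).ncard : ℝ) := by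
        exact_mod_cast h3
      rw [hcardU]
      push_cast
      linarith
    exact ih (B ∪ S) (by omega) hnewk hinv'

theorem local_to_global_expansion (k d : ℕ) (hk : 0 < k) (hd : 0 < d)
    (c₁ c₂ : ℝ) (hc₁0 : 0 ≤ c₁) (hc₁1 : c₁ ≤ 1) (hc₂0 : 0 ≤ c₂) (hc₂1 : c₂ ≤ 1)
    (hcd : c₁ * (d : ℝ) < (k : ℝ))
    (V : Type) [Fintype V] (G : SimpleGraph V)
    -- `G` has more than `k` vertices
    (hcard : k < Fintype.card V)
    -- maximum degree at most `d`
    (hdeg : ∀ v : V, (G.neighborSet v).ncard ≤ d)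
    -- every `S` with `|S| = k` has `∂_G(S) ≥ c₁ d k`
    (hiso : ∀ S : Set V, S.ncard = k →
      c₁ * (d : ℝ) * (k : ℝ) ≤ (edgeBoundary G S : ℝ)) :
    ∃ V' : Set V, (Fintype.card V : ℝ) - (k : ℝ) ≤ (V'.ncard : ℝ) ∧
      ∀ S : Set V', S.Nonempty → (S.ncard : ℝ) ≤ c₁ * (1 - c₂) / 2 * (k : ℝ) →
        c₁ * c₂ * (d : ℝ) * (S.ncard : ℝ) ≤ (edgeBoundary (G.induce V') S : ℝ) := by
  by_cases hvac : c₁ * (1 - c₂) / 2 * k < 1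
  · -- vacuous case: no nonempty `S` satisfies the size bound
    refine ⟨Set.univ, ?_, ?_⟩
    · rw [Set.ncard_univ, Nat.card_eq_fintype_card]
      have : (0 : ℝ) ≤ (k : ℝ) := Nat.cast_nonneg k
      linarith
    · intro S hSne hSsmall
      have h1 : 1 ≤ S.ncard := (Set.ncard_pos (Set.toFinite _)).2 hSne
      have : (1 : ℝ) ≤ (S.ncard : ℝ) := by exact_mod_cast h1
      linarith
  · push_neg at hvac
    have hkpos : (0 : ℝ) < (k : ℝ) := by exact_mod_cast hk
    have hc₁pos : 0 < c₁ := by nlinarith [mul_nonneg (sub_nonneg.2 hc₂1) hkpos.le]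
    have hc₂lt : c₂ < 1 := by nlinarith [mul_nonneg hc₁0 hkpos.le]
    have hcc : c₁ * c₂ < 1 := by nlinarith [mul_le_of_le_one_left hc₂0 hc₁1]
    have hiso' : ∀ S : Set V, S.ncard = k →
        c₁ * (d : ℝ) * (k : ℝ) ≤ ((bdryIn G Set.univ S).ncard : ℝ) := by
      intro S hS
      have := hiso S hS
      rwa [edgeBoundary_eq_bdryIn] at this
    have hempty : ((bdryIn G Set.univ (∅ : Set V)).ncard : ℝ) ≤
        c₁ * c₂ * d * ((∅ : Set V).ncard : ℝ) := by
      have : bdryIn G Set.univ (∅ : Set V) = ∅ := by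
        ext e
        simp [bdryIn]
      simp [this]
    obtain ⟨C, hCk, hC⟩ := main_rec G d k c₁ c₂ hd hc₁0 hc₂0 hc₂1 hcc hcard hdeg hiso'
      (Fintype.card V) ∅ (by simp) (by simp) hempty
    refine ⟨Cᶜ, ?_, ?_⟩
    · have hcompl : C.ncard + Cᶜ.ncard = Fintype.card V := by
        rw [Set.ncard_add_ncard_compl, Nat.card_eq_fintype_card]
      have h1 : (C.ncard : ℝ) + (Cᶜ.ncard : ℝ) = (Fintype.card V : ℝ) := by exact_mod_cast hcompl
      have h2 : (C.ncard : ℝ) ≤ (k : ℝ) := by exact_mod_cast hCk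
      linarith
    · intro S hSne hSsmall
      rw [edgeBoundary_induce]
      have himg : (Subtype.val '' S).ncard = S.ncard :=
        Set.ncard_image_of_injective _ Subtype.val_injective
      have := hC (Subtype.val '' S) (Subtype.coe_image_subset _ _) (hSne.image _)
        (by rw [himg]; exact hSsmall)
      rwa [himg] at this
end

section
/- There exists ε₀ > 0 such that for every ε ∈ (0, ε₀) there exists δ₀ > 0 such that for every δ ∈ (0, δ₀) there exists d₀ such that the following holds for every integer d ≥ d₀: if G is a d-regular graph, v ∈ V(G), and p satisfies (1+ε−2δ)/d ≤ p ≤ (1+ε)/d, then the probability that there exists a subset U of the neighbourhood of v in G with |U| ≤ δ²·d such that the union over u ∈ U of the connected components of u in the percolated random subgraph G_p has total order between δ·d and 2δ·d is at most exp(−δ²·d). -/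
open Finset

section Cylinder

variable {α : Type*} [DecidableEq α]

lemma sum_weights (D : Finset α) (p : ℝ) :
    ∑ t ∈ D.powerset, p ^ t.card * (1 - p) ^ (D.card - t.card) = 1 := by
  have h := Finset.prod_add (fun _ : α => p) (fun _ : α => 1 - p) D
  simp only [Finset.prod_const] at h
  have : ∀ t ∈ D.powerset, p ^ t.card * (1 - p) ^ (D.card - t.card)
      = p ^ t.card * (1 - p) ^ (D \ t).card := by
    intro t ht
    rw [Finset.card_sdiff_of_subset (Finset.mem_powerset.mp ht)]
  rw [Finset.sum_congr rfl this, ← h]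
  simp

lemma cylinder_measure (E E₁ E₂ : Finset α) (p : ℝ) (h1 : E₁ ⊆ E) (h2 : E₂ ⊆ E)
    (h12 : Disjoint E₁ E₂) :
    ∑ F ∈ E.powerset.filter (fun F => E₁ ⊆ F ∧ Disjoint F E₂),
      p ^ F.card * (1 - p) ^ (E.card - F.card)
      = p ^ E₁.card * (1 - p) ^ E₂.card := by
  classical
  set D := (E \ E₁) \ E₂ with hD
  have hcard : D.card = E.card - E₁.card - E₂.card := by
    rw [hD, Finset.card_sdiff_of_subset, Finset.card_sdiff_of_subset h1]
    intro x hx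
    exact Finset.mem_sdiff.mpr ⟨h2 hx, fun hx1 => (Finset.disjoint_left.mp h12 hx1) hx⟩
  have key : ∑ F ∈ E.powerset.filter (fun F => E₁ ⊆ F ∧ Disjoint F E₂),
      p ^ F.card * (1 - p) ^ (E.card - F.card)
      = ∑ t ∈ D.powerset, p ^ (t.card + E₁.card) * (1 - p) ^ (E.card - (t.card + E₁.card)) := by
    apply Finset.sum_nbij' (fun F => F \ E₁) (fun t => t ∪ E₁)
    · intro F hF
      simp only [Finset.mem_filter, Finset.mem_powerset] at hF
      obtain ⟨hFE, hE1F, hdisj⟩ := hF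
      simp only [Finset.mem_powerset, hD]
      intro x hx
      simp only [Finset.mem_sdiff] at hx ⊢
      exact ⟨⟨hFE hx.1, hx.2⟩, fun hx2 => (Finset.disjoint_left.mp hdisj hx.1) hx2⟩
    · intro t ht
      simp only [Finset.mem_powerset, hD] at ht
      simp only [Finset.mem_filter, Finset.mem_powerset]
      refine ⟨?_, Finset.subset_union_right, ?_⟩
      · apply Finset.union_subset _ h1
        intro x hx
        exact (Finset.mem_sdiff.mp (Finset.mem_sdiff.mp (ht hx)).1).1
      · rw [Finset.disjoint_union_left]
        constructor
        · exact Finset.disjoint_left.mpr (fun x hx => (Finset.mem_sdiff.mp (ht hx)).2)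
        · exact h12
    · intro F hF
      simp only [Finset.mem_filter, Finset.mem_powerset] at hF
      exact Finset.sdiff_union_of_subset hF.2.1
    · intro t ht
      simp only [Finset.mem_powerset, hD] at ht
      apply Finset.union_sdiff_cancel_right
      exact Finset.disjoint_left.mpr (fun x hx => (Finset.mem_sdiff.mp (Finset.mem_sdiff.mp (ht hx)).1).2)
    · intro F hF
      simp only [Finset.mem_filter, Finset.mem_powerset] at hF
      rw [Finset.card_sdiff_of_subset hF.2.1]
      have h1' := Finset.card_le_card hF.2.1
      have h2' := Finset.card_le_card hF.1
      congr 2 <;> omega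
  rw [key]
  have hEcard : E.card = D.card + E₁.card + E₂.card := by
    have hsub : E₁ ∪ E₂ ⊆ E := Finset.union_subset h1 h2
    have := Finset.card_le_card hsub
    rw [Finset.card_union_of_disjoint h12] at this
    omega
  have : ∀ t ∈ D.powerset, p ^ (t.card + E₁.card) * (1 - p) ^ (E.card - (t.card + E₁.card))
      = (p ^ E₁.card * (1 - p) ^ E₂.card) * (p ^ t.card * (1 - p) ^ (D.card - t.card)) := by
    intro t ht
    have htD := Finset.card_le_card (Finset.mem_powerset.mp ht)
    have hexp : E.card - (t.card + E₁.card) = E₂.card + (D.card - t.card) := by omega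
    rw [hexp, pow_add, pow_add]
    ring
  rw [Finset.sum_congr rfl this, ← Finset.mul_sum, sum_weights]
  ring

end Cylinder


open Finset SimpleGraph

section Walks

variable {V : Type} [DecidableEq V]

set_option linter.unusedSectionVars false

/-- If all edges of `P` lie inside `S`, all edges of `F` touching `S` are in `P`, and `P ⊆ F`,
then reachability from a vertex of `S` in the `F`-graph stays in `S` and is witnessed in `P`. -/
lemma reach_closed (S : Finset V) (F P : Finset (Sym2 V))
    (hP : ∀ e ∈ P, ∀ x ∈ e, x ∈ S)
    (hPF : P ⊆ F)
    (hFP : ∀ e ∈ F, (∃ a ∈ e, a ∈ S) → e ∈ P) :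
    ∀ a b, a ∈ S → (SimpleGraph.fromEdgeSet (↑F : Set (Sym2 V))).Reachable a b →
      b ∈ S ∧ (SimpleGraph.fromEdgeSet (↑P : Set (Sym2 V))).Reachable a b := by
  suffices h : ∀ a b (w : (SimpleGraph.fromEdgeSet (↑F : Set (Sym2 V))).Walk a b), a ∈ S →
      b ∈ S ∧ (SimpleGraph.fromEdgeSet (↑P : Set (Sym2 V))).Reachable a b by
    intro a b ha hr
    exact h a b hr.some ha
  intro a b w
  induction w with
  | nil => exact fun ha => ⟨ha, Reachable.refl _⟩
  | @cons a c b h p ih =>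
    intro ha
    rw [SimpleGraph.fromEdgeSet_adj] at h
    have hmemF : s(a, c) ∈ F := h.1
    have hmemP : s(a, c) ∈ P := hFP _ hmemF ⟨a, by simp, ha⟩
    have hc : c ∈ S := hP _ hmemP c (by simp)
    have hPadj : (SimpleGraph.fromEdgeSet (↑P : Set (Sym2 V))).Adj a c := by
      rw [SimpleGraph.fromEdgeSet_adj]
      exact ⟨by exact_mod_cast hmemP, h.2⟩
    obtain ⟨hb, hr⟩ := ih hc
    exact ⟨hb, hPadj.reachable.trans hr⟩

/-- Lengths of walks from `R` to `x` staying inside `S`. -/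
def distSet (H : SimpleGraph V) (R S : Finset V) (x : V) : Set ℕ :=
  {n | ∃ r ∈ R, ∃ w : H.Walk r x, w.length = n ∧ ∀ y ∈ w.support, y ∈ S}

/-- From a graph `H`, roots `R ⊆ S`, and every vertex of `S` connected to `R` by a walk inside
`S`, extract a sparse edge set `P` spanning `S` from `R`. -/
lemma extract (H : SimpleGraph V) (R : Finset V) :
    ∀ (n : ℕ) (S : Finset V), (S \ R).card ≤ n → R ⊆ S →
    (∀ x ∈ S, ∃ r ∈ R, ∃ w : H.Walk r x, ∀ y ∈ w.support, y ∈ S) →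
    ∃ P : Finset (Sym2 V), (∀ e ∈ P, e ∈ H.edgeSet) ∧ P.card + R.card ≤ S.card ∧
      (∀ e ∈ P, ∀ x ∈ e, x ∈ S) ∧
      ∀ x ∈ S, ∃ r ∈ R, (SimpleGraph.fromEdgeSet (↑P : Set (Sym2 V))).Reachable r x := by
  intro n
  induction n with
  | zero =>
    intro S hcard hRS _
    refine ⟨∅, by simp, by simpa using Finset.card_le_card hRS, by simp, ?_⟩
    intro x hx
    have hxR : x ∈ R := by
      by_contra hxR
      have : x ∈ S \ R := Finset.mem_sdiff.mpr ⟨hx, hxR⟩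
      rw [Finset.card_eq_zero.mp (Nat.le_zero.mp hcard)] at this
      simp at this
    exact ⟨x, hxR, Reachable.refl _⟩
  | succ n ih =>
    intro S hcard hRS hconn
    by_cases hempty : (S \ R) = ∅
    · refine ⟨∅, by simp, by simpa using Finset.card_le_card hRS, by simp, ?_⟩
      intro x hx
      have hxR : x ∈ R := by
        by_contra hxR
        have : x ∈ S \ R := Finset.mem_sdiff.mpr ⟨hx, hxR⟩
        rw [hempty] at this
        simp at this
      exact ⟨x, hxR, Reachable.refl _⟩
    · classical
      have hdne : ∀ x ∈ S, (distSet H R S x).Nonempty := by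
        intro x hx
        obtain ⟨r, hr, w, hw⟩ := hconn x hx
        exact ⟨w.length, r, hr, w, rfl, hw⟩
      obtain ⟨x₀, hx₀mem, hx₀max⟩ :=
        Finset.exists_max_image (S \ R) (fun x => sInf (distSet H R S x))
          (Finset.nonempty_iff_ne_empty.mpr hempty)
      obtain ⟨hx₀S, hx₀R⟩ := Finset.mem_sdiff.mp hx₀mem
      obtain ⟨r₀, hr₀R, w₀, hw₀len, hw₀supp⟩ := Nat.sInf_mem (hdne x₀ hx₀S)
      have hT1 : 1 ≤ sInf (distSet H R S x₀) := by
        rcases Nat.eq_zero_or_pos (sInf (distSet H R S x₀)) with h0 | h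
        · exfalso
          have : r₀ = x₀ := Walk.eq_of_length_eq_zero (by rw [hw₀len]; exact h0)
          exact hx₀R (this ▸ hr₀R)
        · exact h
      rcases hw : w₀.reverse with _ | ⟨hadj, p⟩
      · exfalso
        have h0 : w₀.reverse.length = 0 := by rw [hw]; rfl
        rw [Walk.length_reverse, hw₀len] at h0
        omega
      · rename_i y
        -- hadj : H.Adj x₀ y, p : H.Walk y r₀
        have hpsupp : ∀ z ∈ p.support, z ∈ S := by
          intro z hz
          apply hw₀supp
          have : z ∈ w₀.reverse.support := by rw [hw]; simp [hz]
          rwa [Walk.support_reverse, List.mem_reverse] at this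
        have hyS : y ∈ S := hpsupp y p.start_mem_support
        have hplen : p.length + 1 = sInf (distSet H R S x₀) := by
          have : w₀.reverse.length = p.length + 1 := by rw [hw]; simp
          rw [Walk.length_reverse, hw₀len] at this
          omega
        have hdisty : sInf (distSet H R S y) ≤ sInf (distSet H R S x₀) - 1 := by
          apply Nat.sInf_le
          refine ⟨r₀, hr₀R, p.reverse, ?_, ?_⟩
          · rw [Walk.length_reverse]; omega
          · intro z hz
            rw [Walk.support_reverse, List.mem_reverse] at hz
            exact hpsupp z hz
        have hyne : y ≠ x₀ := by
          intro hyx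
          rw [hyx] at hdisty
          omega
        -- every z ∈ S.erase x₀ has a within-(S.erase x₀) walk from R
        have hconn' : ∀ z ∈ S.erase x₀, ∃ r ∈ R, ∃ w : H.Walk r z,
            ∀ y' ∈ w.support, y' ∈ S.erase x₀ := by
          intro z hz
          obtain ⟨hzx, hzS⟩ := Finset.mem_erase.mp hz
          obtain ⟨r, hrR, w, hwlen, hwsupp⟩ := Nat.sInf_mem (hdne z hzS)
          have hzle : sInf (distSet H R S z) ≤ sInf (distSet H R S x₀) := by
            by_cases hzR : z ∈ R
            · have : 0 ∈ distSet H R S z := ⟨z, hzR, Walk.nil, rfl, by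
                intro y' hy'
                simp only [Walk.support_nil, List.mem_singleton] at hy'
                rwa [hy']⟩
              have := Nat.sInf_le this
              omega
            · exact hx₀max z (Finset.mem_sdiff.mpr ⟨hzS, hzR⟩)
          have hx₀not : x₀ ∉ w.support := by
            intro hx₀in
            have htake := Walk.length_takeUntil_le w hx₀in
            have htakelen : sInf (distSet H R S x₀) ≤ (w.takeUntil x₀ hx₀in).length := by
              apply Nat.sInf_le
              exact ⟨r, hrR, w.takeUntil x₀ hx₀in, rfl,
                fun y' hy' => hwsupp y' (Walk.support_takeUntil_subset w hx₀in hy')⟩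
            have hspec := Walk.take_spec w hx₀in
            have hlen : (w.takeUntil x₀ hx₀in).length + (w.dropUntil x₀ hx₀in).length
                = w.length := by rw [← Walk.length_append, hspec]
            have hdrop0 : (w.dropUntil x₀ hx₀in).length = 0 := by omega
            exact hzx (Walk.eq_of_length_eq_zero hdrop0).symm
          exact ⟨r, hrR, w, fun y' hy' =>
            Finset.mem_erase.mpr ⟨fun h => hx₀not (h ▸ hy'), hwsupp y' hy'⟩⟩
        have hRS' : R ⊆ S.erase x₀ := fun r hr =>
          Finset.mem_erase.mpr ⟨fun h => hx₀R (h ▸ hr), hRS hr⟩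
        have hcard' : ((S.erase x₀) \ R).card ≤ n := by
          have h1 : (S.erase x₀) \ R = (S \ R).erase x₀ := by
            ext z
            simp only [Finset.mem_sdiff, Finset.mem_erase]
            tauto
          rw [h1, Finset.card_erase_of_mem hx₀mem]
          omega
        obtain ⟨P', hP'edge, hP'card, hP'in, hP'reach⟩ := ih (S.erase x₀) hcard' hRS' hconn'
        refine ⟨insert s(x₀, y) P', ?_, ?_, ?_, ?_⟩
        · intro e he
          rcases Finset.mem_insert.mp he with h | h
          · rw [h]; exact hadj
          · exact hP'edge e h
        · have := Finset.card_insert_le s(x₀, y) P'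
          have hSe : (S.erase x₀).card = S.card - 1 := Finset.card_erase_of_mem hx₀S
          have hS1 : 1 ≤ S.card := Finset.card_pos.mpr ⟨x₀, hx₀S⟩
          omega
        · intro e he x hx
          rcases Finset.mem_insert.mp he with h | h
          · rw [h] at hx
            rcases Sym2.mem_iff.mp hx with h' | h'
            · rw [h']; exact hx₀S
            · rw [h']; exact hyS
          · exact Finset.mem_of_mem_erase (hP'in e h x hx)
        · intro z hzS
          have hmono : (SimpleGraph.fromEdgeSet (↑P' : Set (Sym2 V))) ≤
              (SimpleGraph.fromEdgeSet (↑(insert s(x₀, y) P') : Set (Sym2 V))) := by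
            apply SimpleGraph.fromEdgeSet_mono
            intro e he
            simp only [Finset.coe_insert, Set.mem_insert_iff]
            right; exact he
          by_cases hzx : z = x₀
          · obtain ⟨r, hrR, hry⟩ := hP'reach y (Finset.mem_erase.mpr ⟨hyne, hyS⟩)
            have hyx₀adj : (SimpleGraph.fromEdgeSet
                (↑(insert s(x₀, y) P') : Set (Sym2 V))).Adj y x₀ := by
              rw [SimpleGraph.fromEdgeSet_adj]
              constructor
              · simp only [Finset.coe_insert, Set.mem_insert_iff]
                left
                rw [Sym2.eq_swap]
              · exact hyne
            exact ⟨r, hrR, hzx ▸ ((hry.mono hmono).trans hyx₀adj.reachable)⟩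
          · obtain ⟨r, hrR, hrz⟩ := hP'reach z (Finset.mem_erase.mpr ⟨hzx, hzS⟩)
            exact ⟨r, hrR, hrz.mono hmono⟩

end Walks


open Finset SimpleGraph

section Graphs

variable {V : Type} [Fintype V] [DecidableEq V]

open scoped Classical in
/-- Edges of `E` with at least one endpoint in `S`. -/
noncomputable def incFin (E : Finset (Sym2 V)) (S : Finset V) : Finset (Sym2 V) :=
  E.filter (fun e => ∃ a ∈ e, a ∈ S)

open scoped Classical in
/-- Edges of `E` with exactly one endpoint in `S`. -/
noncomputable def bdryFin (E : Finset (Sym2 V)) (S : Finset V) : Finset (Sym2 V) :=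
  E.filter (fun e => ∃ a b, e = s(a, b) ∧ a ∈ S ∧ b ∉ S)

lemma mem_incFin {E : Finset (Sym2 V)} {S : Finset V} {e : Sym2 V} :
    e ∈ incFin E S ↔ e ∈ E ∧ ∃ a ∈ e, a ∈ S := by
  classical
  simp [incFin]

lemma mem_bdryFin {E : Finset (Sym2 V)} {S : Finset V} {e : Sym2 V} :
    e ∈ bdryFin E S ↔ e ∈ E ∧ ∃ a b, e = s(a, b) ∧ a ∈ S ∧ b ∉ S := by
  classical
  simp [bdryFin]

lemma bdryFin_subset {E : Finset (Sym2 V)} {S : Finset V} : bdryFin E S ⊆ E :=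
  fun _ he => (mem_bdryFin.mp he).1

lemma incFin_subset {E : Finset (Sym2 V)} {S : Finset V} : incFin E S ⊆ E :=
  fun _ he => (mem_incFin.mp he).1

variable (G : SimpleGraph V) [Fintype G.edgeSet] [DecidableRel G.Adj]

lemma incFin_card_le {S : Finset V} {d : ℕ} (hreg : ∀ x : V, G.degree x = d) :
    (incFin G.edgeFinset S).card ≤ S.card * d := by
  classical
  have hsub : incFin G.edgeFinset S ⊆ S.biUnion (fun a => G.incidenceFinset a) := by
    intro e he
    obtain ⟨heE, a, hae, haS⟩ := mem_incFin.mp he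
    refine Finset.mem_biUnion.mpr ⟨a, haS, ?_⟩
    rw [mem_incidenceFinset]
    exact ⟨SimpleGraph.mem_edgeFinset.mp heE, hae⟩
  calc (incFin G.edgeFinset S).card ≤ (S.biUnion (fun a => G.incidenceFinset a)).card :=
        Finset.card_le_card hsub
    _ ≤ ∑ a ∈ S, (G.incidenceFinset a).card := Finset.card_biUnion_le
    _ = ∑ a ∈ S, d := by
        apply Finset.sum_congr rfl
        intro a _
        rw [card_incidenceFinset_eq_degree, hreg]
    _ = S.card * d := by rw [Finset.sum_const, smul_eq_mul]

lemma bdryFin_card_ge {S : Finset V} {d : ℕ} (hreg : ∀ x : V, G.degree x = d) :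
    S.card * (d - S.card) ≤ (bdryFin G.edgeFinset S).card := by
  classical
  set D : Finset ((_ : V) × V) := S.sigma (fun a => G.neighborFinset a \ S) with hD
  have hmaps : ∀ z ∈ D, (fun z : (_ : V) × V => s(z.1, z.2)) z ∈ bdryFin G.edgeFinset S := by
    intro z hz
    obtain ⟨hz1, hz2⟩ := Finset.mem_sigma.mp hz
    obtain ⟨hz2n, hz2S⟩ := Finset.mem_sdiff.mp hz2
    rw [mem_bdryFin]
    refine ⟨?_, z.1, z.2, rfl, hz1, hz2S⟩
    rw [SimpleGraph.mem_edgeFinset, SimpleGraph.mem_edgeSet]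
    exact (SimpleGraph.mem_neighborFinset _ _ _).mp hz2n
  have hinj : Set.InjOn (fun z : (_ : V) × V => s(z.1, z.2)) ↑D := by
    intro z hz z' hz' heq
    obtain ⟨hz1, hz2⟩ := Finset.mem_sigma.mp (Finset.mem_coe.mp hz)
    obtain ⟨hz1', hz2'⟩ := Finset.mem_sigma.mp (Finset.mem_coe.mp hz')
    rw [Finset.mem_sdiff] at hz2 hz2'
    simp only [Sym2.eq_iff] at heq
    rcases heq with ⟨h1, h2⟩ | ⟨h1, h2⟩
    · exact Sigma.ext h1 (heq_of_eq h2)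
    · exfalso
      exact hz2.2 (by rw [h2]; exact hz1')
  have hcard := Finset.card_le_card_of_injOn _ hmaps hinj
  have hDcard : ∑ a ∈ S, (G.neighborFinset a \ S).card = D.card := (Finset.card_sigma S _).symm
  have hge : ∀ a ∈ S, d - S.card ≤ (G.neighborFinset a \ S).card := by
    intro a _
    have := Finset.le_card_sdiff S (G.neighborFinset a)
    rwa [card_neighborFinset_eq_degree, hreg] at this
  have : S.card * (d - S.card) ≤ ∑ a ∈ S, (G.neighborFinset a \ S).card := by
    calc S.card * (d - S.card) = ∑ _a ∈ S, (d - S.card) := by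
          rw [Finset.sum_const, smul_eq_mul]
      _ ≤ ∑ a ∈ S, (G.neighborFinset a \ S).card := Finset.sum_le_sum hge
  omega

end Graphs

section PercLemmas

variable {V : Type} [Fintype V]

open scoped Classical

lemma edgeSet_fromEdgeSet_of_subset {G : SimpleGraph V} {F : Finset (Sym2 V)}
    (hF : F ⊆ G.edgeFinset) :
    (SimpleGraph.fromEdgeSet (↑F : Set (Sym2 V))).edgeSet = ↑F := by
  rw [SimpleGraph.edgeSet_fromEdgeSet]
  ext e
  simp only [Set.mem_diff, Set.mem_setOf_eq, Finset.mem_coe, and_iff_left_iff_imp]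
  intro he
  exact SimpleGraph.not_isDiag_of_mem_edgeSet G (SimpleGraph.mem_edgeFinset.mp (hF he))

lemma percProb_union_bound (G : SimpleGraph V) (p : ℝ) (hp0 : 0 ≤ p) (hp1 : p ≤ 1)
    {ι : Type*} (T : Finset ι) (A : SimpleGraph V → Prop) (B : ι → SimpleGraph V → Prop)
    (h : ∀ F ∈ G.edgeFinset.powerset, A (SimpleGraph.fromEdgeSet (↑F : Set (Sym2 V))) →
      ∃ t ∈ T, B t (SimpleGraph.fromEdgeSet (↑F : Set (Sym2 V)))) :
    percProb G p A ≤ ∑ t ∈ T, percProb G p (B t) := by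
  unfold percProb
  rw [Finset.sum_comm]
  apply Finset.sum_le_sum
  intro F hF
  have hw : (0:ℝ) ≤ p ^ F.card * (1 - p) ^ (G.edgeFinset.card - F.card) :=
    mul_nonneg (pow_nonneg hp0 _) (pow_nonneg (by linarith) _)
  by_cases hA : A (SimpleGraph.fromEdgeSet (↑F : Set (Sym2 V)))
  · rw [if_pos hA]
    obtain ⟨t₀, ht₀, hB⟩ := h F hF hA
    have hsingle := Finset.single_le_sum (f := fun t =>
      if B t (SimpleGraph.fromEdgeSet (↑F : Set (Sym2 V))) then
        p ^ F.card * (1 - p) ^ (G.edgeFinset.card - F.card) else 0)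
      (fun t _ => by split_ifs with h; exacts [hw, le_rfl]) ht₀
    rw [if_pos hB] at hsingle
    exact hsingle
  · rw [if_neg hA]
    apply Finset.sum_nonneg
    intro t _
    split_ifs
    · exact hw
    · exact le_rfl

lemma percProb_cyl (G : SimpleGraph V) (p : ℝ) (P B : Finset (Sym2 V))
    (hP : P ⊆ G.edgeFinset) (hB : B ⊆ G.edgeFinset) (hPB : Disjoint P B) :
    percProb G p (fun H => ↑P ⊆ H.edgeSet ∧ Disjoint H.edgeSet (↑B : Set (Sym2 V)))
      = p ^ P.card * (1 - p) ^ B.card := by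
  unfold percProb
  rw [← cylinder_measure G.edgeFinset P B p hP hB hPB, Finset.sum_filter]
  apply Finset.sum_congr rfl
  intro F hF
  have hFE : F ⊆ G.edgeFinset := Finset.mem_powerset.mp hF
  have hedge := edgeSet_fromEdgeSet_of_subset hFE
  have hiff : ((fun H => ↑P ⊆ H.edgeSet ∧ Disjoint H.edgeSet (↑B : Set (Sym2 V)))
      (SimpleGraph.fromEdgeSet (↑F : Set (Sym2 V)))) ↔ (P ⊆ F ∧ Disjoint F B) := by
    show ↑P ⊆ (SimpleGraph.fromEdgeSet (↑F : Set (Sym2 V))).edgeSet ∧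
        Disjoint (SimpleGraph.fromEdgeSet (↑F : Set (Sym2 V))).edgeSet ↑B ↔ _
    rw [hedge, Finset.coe_subset, Finset.disjoint_coe]
  by_cases hc : P ⊆ F ∧ Disjoint F B
  · rw [if_pos hc, if_pos (hiff.mpr hc)]
  · rw [if_neg hc, if_neg (fun hh => hc (hiff.mp hh))]
lemma witness_count (G : SimpleGraph V) {d s ℓ : ℕ} (q : ℝ) (hq0 : 0 ≤ q) (hq1 : q ≤ 1)
    (hreg : ∀ x : V, G.degree x = d) (R : Finset V)
    (W : Finset (Finset V × Finset (Sym2 V)))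
    (hW : ∀ w ∈ W, w.1.card = s ∧ w.2.card = ℓ ∧ w.2 ⊆ G.edgeFinset ∧ R ⊆ w.1 ∧
      (∀ e ∈ w.2, ∀ x ∈ e, x ∈ w.1) ∧
      (∀ x ∈ w.1, ∃ r ∈ R, (SimpleGraph.fromEdgeSet (↑w.2 : Set (Sym2 V))).Reachable r x)) :
    (W.card : ℝ) * (q ^ ℓ * (1 - q) ^ (s * d)) ≤ 1 := by
  have hq1' : (0:ℝ) ≤ 1 - q := by linarith
  have hwq : ∀ F : Finset (Sym2 V),
      (0:ℝ) ≤ q ^ F.card * (1 - q) ^ (G.edgeFinset.card - F.card) :=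
    fun F => mul_nonneg (pow_nonneg hq0 _) (pow_nonneg hq1' _)
  -- each witness is contained in S and P touches S
  have hPinc : ∀ w ∈ W, w.2 ⊆ incFin G.edgeFinset w.1 := by
    intro w hw
    obtain ⟨hs, hl, hPE, hRS, hPin, hreach⟩ := hW w hw
    intro e
    induction e using Sym2.ind with
    | _ a b =>
      intro he
      rw [mem_incFin]
      exact ⟨hPE he, a, by simp, hPin _ he a (by simp)⟩
  -- step 1 : cylinder lower bound for each witness
  have key1 : ∀ w ∈ W, q ^ ℓ * (1 - q) ^ (s * d) ≤
      ∑ F ∈ G.edgeFinset.powerset.filter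
        (fun F => w.2 ⊆ F ∧ Disjoint F (incFin G.edgeFinset w.1 \ w.2)),
        q ^ F.card * (1 - q) ^ (G.edgeFinset.card - F.card) := by
    intro w hw
    obtain ⟨hs, hl, hPE, hRS, hPin, hreach⟩ := hW w hw
    rw [cylinder_measure G.edgeFinset w.2 (incFin G.edgeFinset w.1 \ w.2) q hPE
      (fun e he => incFin_subset (Finset.mem_sdiff.mp he).1)
      (Finset.sdiff_disjoint.symm)]
    have hcard : (incFin G.edgeFinset w.1 \ w.2).card ≤ s * d := by
      have h1 : (incFin G.edgeFinset w.1).card ≤ s * d := by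
        have := incFin_card_le G (S := w.1) hreg
        rwa [hs] at this
      have h2 := Finset.card_le_card (Finset.sdiff_subset (s := incFin G.edgeFinset w.1)
        (t := w.2))
      omega
    rw [hl]
    apply mul_le_mul_of_nonneg_left _ (pow_nonneg hq0 _)
    exact pow_le_pow_of_le_one hq1' (by linarith) hcard
  -- uniqueness : a single configuration F lies in at most one witness cylinder
  have huniq : ∀ F ∈ G.edgeFinset.powerset, ∀ w ∈ W,
      (w.2 ⊆ F ∧ Disjoint F (incFin G.edgeFinset w.1 \ w.2)) →
      w.1 = Finset.univ.filter
          (fun x => ∃ r ∈ R, (SimpleGraph.fromEdgeSet (↑F : Set (Sym2 V))).Reachable r x) := by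
    intro F hF w hw hcond
    have hFE : F ⊆ G.edgeFinset := Finset.mem_powerset.mp hF
    obtain ⟨hs, hl, hPE, hRS, hPin, hreach⟩ := hW w hw
    obtain ⟨hPF, hdisj⟩ := hcond
    have hExact : ∀ e ∈ F, (∃ a ∈ e, a ∈ w.1) → e ∈ w.2 := by
      intro e heF htouch
      by_contra hne
      have hmem : e ∈ incFin G.edgeFinset w.1 \ w.2 :=
        Finset.mem_sdiff.mpr ⟨mem_incFin.mpr ⟨hFE heF, htouch⟩, hne⟩
      exact (Finset.disjoint_left.mp hdisj heF) hmem
    have hclose := reach_closed w.1 F w.2 hPin hPF hExact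
    ext x
    simp only [Finset.mem_filter, Finset.mem_univ, true_and]
    constructor
    · intro hx
      obtain ⟨r, hr, hrx⟩ := hreach x hx
      refine ⟨r, hr, hrx.mono (SimpleGraph.fromEdgeSet_mono ?_)⟩
      exact_mod_cast hPF
    · rintro ⟨r, hr, hrx⟩
      exact (hclose r x (hRS hr) hrx).1
  have huniq2 : ∀ F ∈ G.edgeFinset.powerset, ∀ w₁ ∈ W, ∀ w₂ ∈ W,
      (w₁.2 ⊆ F ∧ Disjoint F (incFin G.edgeFinset w₁.1 \ w₁.2)) →
      (w₂.2 ⊆ F ∧ Disjoint F (incFin G.edgeFinset w₂.1 \ w₂.2)) → w₁ = w₂ := by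
    intro F hF w₁ hw₁ w₂ hw₂ hc₁ hc₂
    have hS : w₁.1 = w₂.1 := by
      rw [huniq F hF w₁ hw₁ hc₁, huniq F hF w₂ hw₂ hc₂]
    have hFE : F ⊆ G.edgeFinset := Finset.mem_powerset.mp hF
    have hPeq : ∀ w ∈ W, (w.2 ⊆ F ∧ Disjoint F (incFin G.edgeFinset w.1 \ w.2)) →
        w.2 = F ∩ incFin G.edgeFinset w.1 := by
      intro w hw hcond
      obtain ⟨hs, hl, hPE, hRS, hPin, hreach⟩ := hW w hw
      obtain ⟨hPF, hdisj⟩ := hcond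
      ext e
      constructor
      · intro he
        exact Finset.mem_inter.mpr ⟨hPF he, hPinc w hw he⟩
      · intro he
        obtain ⟨heF, heinc⟩ := Finset.mem_inter.mp he
        by_contra hne
        have hmem : e ∈ incFin G.edgeFinset w.1 \ w.2 := Finset.mem_sdiff.mpr ⟨heinc, hne⟩
        exact (Finset.disjoint_left.mp hdisj heF) hmem
    have hP : w₁.2 = w₂.2 := by
      rw [hPeq w₁ hw₁ hc₁, hPeq w₂ hw₂ hc₂, hS]
    exact Prod.ext hS hP
  -- step 2 : the cylinders are disjoint, so the sum of their masses is at most 1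
  have key2 : ∑ w ∈ W, (∑ F ∈ G.edgeFinset.powerset.filter
        (fun F => w.2 ⊆ F ∧ Disjoint F (incFin G.edgeFinset w.1 \ w.2)),
        q ^ F.card * (1 - q) ^ (G.edgeFinset.card - F.card)) ≤ 1 := by
    have hstep : ∀ w ∈ W, (∑ F ∈ G.edgeFinset.powerset.filter
        (fun F => w.2 ⊆ F ∧ Disjoint F (incFin G.edgeFinset w.1 \ w.2)),
        q ^ F.card * (1 - q) ^ (G.edgeFinset.card - F.card))
        = ∑ F ∈ G.edgeFinset.powerset,
          if (w.2 ⊆ F ∧ Disjoint F (incFin G.edgeFinset w.1 \ w.2)) then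
            q ^ F.card * (1 - q) ^ (G.edgeFinset.card - F.card) else 0 :=
      fun w _ => Finset.sum_filter _ _
    rw [Finset.sum_congr rfl hstep, Finset.sum_comm]
    calc ∑ F ∈ G.edgeFinset.powerset, ∑ w ∈ W,
          (if (w.2 ⊆ F ∧ Disjoint F (incFin G.edgeFinset w.1 \ w.2)) then
            q ^ F.card * (1 - q) ^ (G.edgeFinset.card - F.card) else 0)
        ≤ ∑ F ∈ G.edgeFinset.powerset, q ^ F.card * (1 - q) ^ (G.edgeFinset.card - F.card) := by
          apply Finset.sum_le_sum
          intro F hF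
          rw [← Finset.sum_filter]
          rcases Nat.le_one_iff_eq_zero_or_eq_one.mp (Finset.card_le_one.mpr
            (fun w₁ hw₁ w₂ hw₂ => huniq2 F hF w₁ (Finset.mem_filter.mp hw₁).1 w₂
              (Finset.mem_filter.mp hw₂).1 (Finset.mem_filter.mp hw₁).2
              (Finset.mem_filter.mp hw₂).2)) with h0 | h1
          · rw [Finset.card_eq_zero.mp h0]
            simpa using hwq F
          · obtain ⟨w₀, hw₀⟩ := Finset.card_eq_one.mp h1
            rw [hw₀, Finset.sum_singleton]
      _ = 1 := sum_weights _ _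
  calc (W.card : ℝ) * (q ^ ℓ * (1 - q) ^ (s * d))
      = ∑ _w ∈ W, (q ^ ℓ * (1 - q) ^ (s * d)) := by
        rw [Finset.sum_const, nsmul_eq_mul]
    _ ≤ ∑ w ∈ W, (∑ F ∈ G.edgeFinset.powerset.filter
        (fun F => w.2 ⊆ F ∧ Disjoint F (incFin G.edgeFinset w.1 \ w.2)),
        q ^ F.card * (1 - q) ^ (G.edgeFinset.card - F.card)) := Finset.sum_le_sum key1
    _ ≤ 1 := key2

end PercLemmas


open Finset

lemma count_small_subsets {α : Type*} [DecidableEq α] (Nv : Finset α) (x : ℝ)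
    (hx0 : 0 ≤ x) (hx1 : x ≤ 1) (Q : Finset α → Prop) [DecidablePred Q] (M : ℕ)
    (hQ : ∀ R ∈ Nv.powerset, Q R → R.card ≤ M) :
    ((Nv.powerset.filter Q).card : ℝ) * x^M ≤ (1+x)^Nv.card := by
  have hbinom : ∑ R ∈ Nv.powerset, x^R.card = (1+x)^Nv.card := by
    have h := Finset.prod_add (fun _ : α => x) (fun _ : α => 1) Nv
    simp only [Finset.prod_const, one_pow, mul_one] at h
    rw [add_comm x 1] at h
    exact h.symm
  calc ((Nv.powerset.filter Q).card : ℝ) * x^M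
      = ∑ _R ∈ Nv.powerset.filter Q, x^M := by rw [Finset.sum_const, nsmul_eq_mul]
    _ ≤ ∑ R ∈ Nv.powerset.filter Q, x^R.card := by
        apply Finset.sum_le_sum
        intro R hR
        obtain ⟨hRp, hRQ⟩ := Finset.mem_filter.mp hR
        exact pow_le_pow_of_le_one hx0 hx1 (hQ R hRp hRQ)
    _ ≤ ∑ R ∈ Nv.powerset, x^R.card := by
        apply Finset.sum_le_sum_of_subset_of_nonneg (Finset.filter_subset _ _)
        intro R _ _
        positivity
    _ = (1+x)^Nv.card := hbinom

set_option maxHeartbeats 1000000 in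
lemma final_numeric (d M : ℕ) (ε δ C : ℝ) (hε0 : 0 < ε) (hε : ε ≤ 1/10) (hδ0 : 0 < δ)
    (hδ : δ ≤ ε^4/10^6) (hM : (M:ℝ) ≤ δ^2*d) (hd1 : 1 ≤ (d:ℝ))
    (hbig : 108*(64/(ε^2*δ))^3 ≤ (d:ℝ)) (hC0 : 0 ≤ C)
    (hC : C * (δ^2)^M ≤ (1+δ^2)^d) :
    C * ((d:ℝ)+1)^2 * Real.exp (-(ε^2/16)*(δ*d)) ≤ Real.exp (-(δ^2*d)) := by
  have hε4 : ε^4 ≤ (1/10:ℝ)^4 := pow_le_pow_left₀ hε0.le hε 4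
  have hδ1 : δ ≤ 1 := by nlinarith
  set r := Real.sqrt δ with hrdef
  have hr0 : 0 < r := Real.sqrt_pos.mpr hδ0
  have hr2 : r * r = δ := Real.mul_self_sqrt hδ0.le
  have hr1 : r ≤ 1 := by
    rw [hrdef, show (1:ℝ) = Real.sqrt 1 by simp]
    exact Real.sqrt_le_sqrt (by simpa using hδ1)
  have hrε : r ≤ ε^2/1000 := by
    rw [hrdef]
    have h1 : Real.sqrt δ ≤ Real.sqrt (ε^4/10^6) := Real.sqrt_le_sqrt hδ
    have h2 : Real.sqrt (ε^4/10^6) = ε^2/1000 := by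
      rw [show ε^4/10^6 = (ε^2/1000)^2 by ring]
      exact Real.sqrt_sq (by positivity)
    linarith
  have hδr : δ ≤ r := by nlinarith
  -- bound C
  have hx : (0:ℝ) < (δ^2)^M := by positivity
  have hCb : C ≤ (1+δ^2)^d * ((δ^2)^M)⁻¹ := by
    have h := (le_div_iff₀ hx).mpr hC
    rwa [div_eq_mul_inv] at h
  -- (1+δ²)^d ≤ exp(δ² d)
  have h2 : ((1:ℝ)+δ^2)^d ≤ Real.exp (δ^2*(d:ℝ)) := by
    calc ((1:ℝ)+δ^2)^d ≤ Real.exp (δ^2)^d := by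
          apply pow_le_pow_left₀ (by positivity)
          have := Real.add_one_le_exp (δ^2)
          linarith
      _ = Real.exp (δ^2*(d:ℝ)) := by rw [← Real.exp_nat_mul]; ring_nf
  -- ((δ²)^M)⁻¹ ≤ exp(4 r δ d)
  have h3 : ((δ^2)^M)⁻¹ ≤ Real.exp (4*r*δ*(d:ℝ)) := by
    have hlogr : -Real.log r ≤ 1/r := by
      have h := Real.log_le_sub_one_of_pos (show (0:ℝ) < 1/r by positivity)
      rw [one_div, Real.log_inv] at h
      have : (0:ℝ) < 1/r := by positivity
      rw [one_div] at *
      linarith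
    have hlogδ2 : -Real.log (δ^2) ≤ 4/r := by
      have hδeq : δ = r^2 := by rw [sq]; exact hr2.symm
      rw [hδeq, ← pow_mul, Real.log_pow]
      push_cast
      rw [div_eq_mul_inv]
      rw [one_div] at hlogr
      nlinarith [hlogr]
    have heq : ((δ^2)^M)⁻¹ = Real.exp ((M:ℝ) * (-Real.log (δ^2))) := by
      rw [mul_neg, Real.exp_neg]
      congr 1
      rw [show ((M:ℝ) * Real.log (δ^2)) = ((M:ℕ):ℝ) * Real.log (δ^2) from rfl,
        Real.exp_nat_mul, Real.exp_log (by positivity)]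
    rw [heq]
    apply Real.exp_le_exp.mpr
    calc (M:ℝ) * (-Real.log (δ^2)) ≤ (δ^2*d) * (4/r) := by
          apply mul_le_mul hM hlogδ2 ?_ (by positivity)
          · have h := Real.log_le_sub_one_of_pos (show (0:ℝ) < δ^2 by positivity)
            nlinarith [Real.add_one_le_exp (Real.log (δ^2))]
      _ = 4*r*δ*(d:ℝ) := by
          rw [show δ^2 = (r*r)*δ by rw [hr2]; ring]
          field_simp
  -- (d+1)² ≤ exp((ε²δ/64) d)
  have h4 : ((d:ℝ)+1)^2 ≤ Real.exp ((ε^2*δ/64)*(d:ℝ)) := by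
    set K := ε^2*δ/64 with hKdef
    have hK0 : 0 < K := by positivity
    have hbig' : 108/K^3 ≤ (d:ℝ) := by
      have heq2 : 108/K^3 = 108*(64/(ε^2*δ))^3 := by
        rw [hKdef]
        field_simp
      rw [heq2]
      exact hbig
    have hKd : 108 ≤ K^3*(d:ℝ) := by
      rw [div_le_iff₀ (by positivity)] at hbig'
      linarith [hbig']
    have hexp3 : Real.exp (K*(d:ℝ)) = Real.exp (K*(d:ℝ)/3)^3 := by
      rw [← Real.exp_nat_mul]
      congr 1
      push_cast
      ring
    have hexpge : (K*(d:ℝ)/3)^3 ≤ Real.exp (K*(d:ℝ))  := by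
      rw [hexp3]
      apply pow_le_pow_left₀ (by positivity)
      have := Real.add_one_le_exp (K*(d:ℝ)/3)
      linarith
    have hcube : 4*(d:ℝ)^2 ≤ (K*(d:ℝ)/3)^3 := by
      have hd0 : (0:ℝ) < d := by linarith
      have : (K*(d:ℝ)/3)^3 = (K^3*(d:ℝ))*(d:ℝ)^2/27 := by ring
      rw [this]
      nlinarith [sq_nonneg (d:ℝ), mul_le_mul_of_nonneg_right hKd (sq_nonneg (d:ℝ))]
    have hsq : ((d:ℝ)+1)^2 ≤ 4*(d:ℝ)^2 := by nlinarith
    calc ((d:ℝ)+1)^2 ≤ 4*(d:ℝ)^2 := hsq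
      _ ≤ (K*(d:ℝ)/3)^3 := hcube
      _ ≤ Real.exp (K*(d:ℝ)) := hexpge
      _ = Real.exp ((ε^2*δ/64)*(d:ℝ)) := by rw [hKdef]
  -- combine
  have hd0 : (0:ℝ) ≤ d := by linarith
  calc C * ((d:ℝ)+1)^2 * Real.exp (-(ε^2/16)*(δ*d))
      ≤ ((1+δ^2)^d * ((δ^2)^M)⁻¹) * Real.exp ((ε^2*δ/64)*(d:ℝ)) * Real.exp (-(ε^2/16)*(δ*d)) := by
        apply mul_le_mul_of_nonneg_right _ (Real.exp_nonneg _)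
        apply mul_le_mul hCb h4 (by positivity) ?_
        have : (0:ℝ) < (1+δ^2)^d * ((δ^2)^M)⁻¹ := by positivity
        linarith
    _ ≤ (Real.exp (δ^2*(d:ℝ)) * Real.exp (4*r*δ*(d:ℝ))) * Real.exp ((ε^2*δ/64)*(d:ℝ))
        * Real.exp (-(ε^2/16)*(δ*d)) := by
        apply mul_le_mul_of_nonneg_right _ (Real.exp_nonneg _)
        apply mul_le_mul_of_nonneg_right _ (Real.exp_nonneg _)
        apply mul_le_mul h2 h3 (by positivity) (Real.exp_nonneg _)
    _ = Real.exp (δ^2*(d:ℝ) + 4*r*δ*(d:ℝ) + (ε^2*δ/64)*(d:ℝ) + (-(ε^2/16)*(δ*d))) := by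
        rw [← Real.exp_add, ← Real.exp_add, ← Real.exp_add]
    _ ≤ Real.exp (-(δ^2*d)) := by
        apply Real.exp_le_exp.mpr
        have hkey : δ^2 + 4*r*δ + (ε^2*δ/64) - (ε^2/16)*δ + δ^2 ≤ 0 := by
          have h6 : 2*δ + 4*r ≤ 6*r := by linarith
          have h7 : 6*r ≤ 6*(ε^2/1000) := by linarith
          nlinarith [mul_le_mul_of_nonneg_right (show 2*δ+4*r ≤ 6*(ε^2/1000) by linarith)
            hδ0.le, sq_nonneg ε, mul_pos hε0 hε0]
        nlinarith [mul_le_mul_of_nonneg_right hkey hd0]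



open Finset

lemma one_add_le_exp_aux {ε : ℝ} (hε0 : 0 < ε) (hε : ε ≤ 1/2) :
    1 + ε ≤ Real.exp (ε - ε^2/8) := by
  have h1 := Real.add_one_le_exp (ε/2)
  have h2 := Real.add_one_le_exp (-(ε^2/8))
  have hsplit : Real.exp (ε - ε^2/8) = (Real.exp (ε/2) * Real.exp (ε/2)) * Real.exp (-(ε^2/8)) := by
    rw [← Real.exp_add, ← Real.exp_add]
    ring_nf
  rw [hsplit]
  have hb1 : (0:ℝ) ≤ 1 + ε/2 := by linarith
  have hb2 : (0:ℝ) ≤ 1 - ε^2/8 := by nlinarith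
  have hsq : (1 + ε/2) * (1 + ε/2) ≤ Real.exp (ε/2) * Real.exp (ε/2) := by
    apply mul_le_mul (by linarith) (by linarith) hb1 (by positivity)
  have hmul : ((1 + ε/2) * (1 + ε/2)) * (1 - ε^2/8)
      ≤ (Real.exp (ε/2) * Real.exp (ε/2)) * Real.exp (-(ε^2/8)) := by
    apply mul_le_mul hsq (by linarith) hb2 (by positivity)
  have h3 : ε^3 ≤ ε^2/2 := by nlinarith [sq_nonneg ε]
  have h4 : ε^4 ≤ ε^2/4 := by nlinarith [sq_nonneg ε, sq_nonneg (ε^2)]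
  nlinarith [hmul, h3, h4]

set_option maxHeartbeats 1000000 in
lemma num_core (d s ℓ : ℕ) (ε δ p : ℝ) (hd : 2 ≤ d) (hε0 : 0 < ε) (hε : ε ≤ 1/10)
    (hδ0 : 0 < δ) (hδ : δ ≤ ε^2/192) (hdε : 1/((d:ℝ) - 1) ≤ ε^2/32)
    (hs : (s:ℝ) ≤ 2*δ*d) (hsd : s ≤ d) (hls : ℓ ≤ s)
    (hp1 : (1 + ε - 2*δ)/d ≤ p) (hp2 : p ≤ (1 + ε)/d) :
    p^ℓ * (1-p)^(s*(d-s)) ≤ Real.exp (-(ε^2/16)*s) * ((1/(d:ℝ))^ℓ * (1-1/(d:ℝ))^(s*d)) := by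
  have hd1 : (1:ℝ) < d := by
    have : (2:ℝ) ≤ d := by exact_mod_cast hd
    linarith
  have hd0 : (0:ℝ) < d := by linarith
  have hδ1 : δ ≤ 1/192 := by nlinarith
  have hd2 : (2:ℝ) ≤ d := by exact_mod_cast hd
  have hdm1 : (0:ℝ) < (d:ℝ) - 1 := by linarith
  have hdm1' : ((d:ℝ) - 1) ≠ 0 := by linarith
  have hp0 : 0 ≤ p := le_trans (div_nonneg (by linarith) hd0.le) hp1
  have hp1' : p ≤ 1 := by
    apply le_trans hp2
    rw [div_le_one hd0]
    linarith
  have h1p0 : (0:ℝ) ≤ 1 - p := by linarith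
  have hq0 : (0:ℝ) ≤ 1 - 1/(d:ℝ) := by
    have : 1/(d:ℝ) ≤ 1 := by rw [div_le_one hd0]; linarith
    linarith
  -- step 1 : bound p^ℓ
  have step1 : p^ℓ ≤ (1/(d:ℝ))^ℓ * (1+ε)^s := by
    calc p^ℓ ≤ ((1+ε)/(d:ℝ))^ℓ := pow_le_pow_left₀ hp0 hp2 ℓ
      _ = (1/(d:ℝ))^ℓ * (1+ε)^ℓ := by rw [← mul_pow]; ring_nf
      _ ≤ (1/(d:ℝ))^ℓ * (1+ε)^s := by
          apply mul_le_mul_of_nonneg_left _ (by positivity)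
          exact pow_le_pow_right₀ (by linarith) hls
  -- step 2 : boundary closed
  have step2 : (1-p)^(s*(d-s)) ≤ Real.exp (-((1+ε-2*δ)*(1-2*δ)*s)) := by
    have hexp : (1-p)^(s*(d-s)) ≤ Real.exp (-p)^(s*(d-s)) := by
      apply pow_le_pow_left₀ h1p0
      have := Real.add_one_le_exp (-p)
      linarith
    have heq : Real.exp (-p)^(s*(d-s)) = Real.exp (-(p * (s*(d-s) : ℕ))) := by
      rw [← Real.exp_nat_mul]
      ring_nf
    rw [heq] at hexp
    apply le_trans hexp
    apply Real.exp_le_exp.mpr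
    rw [neg_le_neg_iff]
    have hcast : ((s*(d-s) : ℕ):ℝ) = (s:ℝ) * ((d:ℝ) - s) := by
      push_cast [Nat.cast_sub hsd]
      ring
    rw [hcast]
    have hds : (d:ℝ)*(1-2*δ) ≤ (d:ℝ) - s := by linarith
    have hds0 : (0:ℝ) ≤ (d:ℝ)*(1-2*δ) := by nlinarith
    have hs0 : (0:ℝ) ≤ s := Nat.cast_nonneg s
    have hA0 : (0:ℝ) ≤ 1+ε-2*δ := by nlinarith
    calc (1+ε-2*δ)*(1-2*δ)*(s:ℝ) = ((1+ε-2*δ)/d) * ((s:ℝ) * ((d:ℝ)*(1-2*δ))) := by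
          field_simp
      _ ≤ p * ((s:ℝ) * ((d:ℝ)*(1-2*δ))) := by
          apply mul_le_mul_of_nonneg_right hp1
          positivity
      _ ≤ p * ((s:ℝ) * ((d:ℝ) - s)) := by
          apply mul_le_mul_of_nonneg_left _ hp0
          apply mul_le_mul_of_nonneg_left hds hs0
  -- step 3 : lower bound for (1-1/d)^(s*d)
  have step3 : Real.exp (-(((s*d : ℕ):ℝ)/((d:ℝ)-1))) ≤ (1-1/(d:ℝ))^(s*d) := by
    have hbase : Real.exp (-(1/((d:ℝ)-1))) ≤ 1 - 1/(d:ℝ) := by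
      have h1 := Real.add_one_le_exp (1/((d:ℝ)-1))
      have hpos : (0:ℝ) < 1 + 1/((d:ℝ)-1) := by
        have := one_div_pos.mpr hdm1
        linarith
      rw [Real.exp_neg]
      calc (Real.exp (1/((d:ℝ)-1)))⁻¹ ≤ (1 + 1/((d:ℝ)-1))⁻¹ := by
            apply inv_anti₀ hpos
            linarith
        _ = 1 - 1/(d:ℝ) := by
            have hd0' : (d:ℝ) ≠ 0 := by linarith
            rw [show (1 + 1/((d:ℝ)-1)) = (d:ℝ)/((d:ℝ)-1) by field_simp; ring, inv_div]
            field_simp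
    calc Real.exp (-(((s*d : ℕ):ℝ)/((d:ℝ)-1))) = Real.exp (-(1/((d:ℝ)-1)))^(s*d) := by
          rw [← Real.exp_nat_mul]
          congr 1
          push_cast
          ring
      _ ≤ (1-1/(d:ℝ))^(s*d) := by
          apply pow_le_pow_left₀ (Real.exp_nonneg _) hbase
  -- step 4 : (1+ε)^s ≤ exp((ε - ε²/8) s)
  have step4 : (1+ε)^s ≤ Real.exp ((ε - ε^2/8)*s) := by
    have hb := one_add_le_exp_aux hε0 (by linarith)
    calc (1+ε)^s ≤ Real.exp (ε - ε^2/8)^s := pow_le_pow_left₀ (by linarith) hb s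
      _ = Real.exp ((ε - ε^2/8)*s) := by rw [← Real.exp_nat_mul]; ring_nf
  -- combine
  have main : (1+ε)^s * Real.exp (-((1+ε-2*δ)*(1-2*δ)*s))
      ≤ Real.exp (-(ε^2/16)*s) * (1-1/(d:ℝ))^(s*d) := by
    have hsd' : ((s*d : ℕ):ℝ) = (s:ℝ)*(d:ℝ) := by push_cast; ring
    have hkey : (ε - ε^2/8)*s - (1+ε-2*δ)*(1-2*δ)*s ≤ -(ε^2/16)*s - ((s*d : ℕ):ℝ)/((d:ℝ)-1) := by
      rw [hsd']
      have hratio : (s:ℝ)*(d:ℝ)/((d:ℝ)-1) ≤ (s:ℝ)*(1 + ε^2/32) := by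
        have h1 : (d:ℝ)/((d:ℝ)-1) = 1 + 1/((d:ℝ)-1) := by
          field_simp
          ring
        have h2 : (d:ℝ)/((d:ℝ)-1) ≤ 1 + ε^2/32 := by
          rw [h1]; linarith
        calc (s:ℝ)*(d:ℝ)/((d:ℝ)-1) = (s:ℝ) * ((d:ℝ)/((d:ℝ)-1)) := by ring
          _ ≤ (s:ℝ)*(1 + ε^2/32) := by
              apply mul_le_mul_of_nonneg_left h2 (Nat.cast_nonneg s)
      have hbracket : (ε - ε^2/8) - (1+ε-2*δ)*(1-2*δ) + ε^2/16 + (1 + ε^2/32) ≤ 0 := by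
        nlinarith [sq_nonneg δ, mul_nonneg hδ0.le hε0.le]
      have hs0' : (0:ℝ) ≤ (s:ℝ) := Nat.cast_nonneg s
      have hsb : (s:ℝ) * ((ε - ε^2/8) - (1+ε-2*δ)*(1-2*δ) + ε^2/16 + (1 + ε^2/32)) ≤ 0 :=
        mul_nonpos_of_nonneg_of_nonpos hs0' hbracket
      nlinarith [hsb, hratio]
    calc (1+ε)^s * Real.exp (-((1+ε-2*δ)*(1-2*δ)*s))
        ≤ Real.exp ((ε - ε^2/8)*s) * Real.exp (-((1+ε-2*δ)*(1-2*δ)*s)) := by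
          apply mul_le_mul_of_nonneg_right step4 (Real.exp_nonneg _)
      _ = Real.exp ((ε - ε^2/8)*s - (1+ε-2*δ)*(1-2*δ)*s) := by
          rw [← Real.exp_add]; ring_nf
      _ ≤ Real.exp (-(ε^2/16)*s - ((s*d : ℕ):ℝ)/((d:ℝ)-1)) := Real.exp_le_exp.mpr hkey
      _ = Real.exp (-(ε^2/16)*s) * Real.exp (-(((s*d : ℕ):ℝ)/((d:ℝ)-1))) := by
          rw [← Real.exp_add]; ring_nf
      _ ≤ Real.exp (-(ε^2/16)*s) * (1-1/(d:ℝ))^(s*d) := by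
          apply mul_le_mul_of_nonneg_left step3 (Real.exp_nonneg _)
  calc p^ℓ * (1-p)^(s*(d-s))
      ≤ ((1/(d:ℝ))^ℓ * (1+ε)^s) * Real.exp (-((1+ε-2*δ)*(1-2*δ)*s)) := by
        apply mul_le_mul step1 step2 (pow_nonneg h1p0 _) (by positivity)
    _ = (1/(d:ℝ))^ℓ * ((1+ε)^s * Real.exp (-((1+ε-2*δ)*(1-2*δ)*s))) := by ring
    _ ≤ (1/(d:ℝ))^ℓ * (Real.exp (-(ε^2/16)*s) * (1-1/(d:ℝ))^(s*d)) := by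
        apply mul_le_mul_of_nonneg_left main (by positivity)
    _ = Real.exp (-(ε^2/16)*s) * ((1/(d:ℝ))^ℓ * (1-1/(d:ℝ))^(s*d)) := by ring


set_option maxHeartbeats 2000000 in
theorem neighbourhood_union_of_components_bound :
    ∃ ε₀ : ℝ, 0 < ε₀ ∧ ∀ ε : ℝ, 0 < ε → ε < ε₀ →
      ∃ δ₀ : ℝ, 0 < δ₀ ∧ ∀ δ : ℝ, 0 < δ → δ < δ₀ →
        ∃ d₀ : ℕ, ∀ d : ℕ, d₀ ≤ d →
          ∀ (V : Type) [Fintype V] (G : SimpleGraph V),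
            -- `G` is `d`-regular
            (∀ v : V, (G.neighborSet v).ncard = d) →
            ∀ v : V, ∀ p : ℝ, (1 + ε - 2 * δ) / (d : ℝ) ≤ p → p ≤ (1 + ε) / (d : ℝ) →
              percProb G p (fun H =>
                ∃ U : Set V, U ⊆ G.neighborSet v ∧ (U.ncard : ℝ) ≤ δ ^ 2 * (d : ℝ) ∧
                  δ * (d : ℝ) ≤
                    (((⋃ u ∈ U, (H.connectedComponentMk u).supp)).ncard : ℝ) ∧
                  (((⋃ u ∈ U, (H.connectedComponentMk u).supp)).ncard : ℝ) ≤
                    2 * δ * (d : ℝ)) ≤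
                Real.exp (-(δ ^ 2 * (d : ℝ))) := by
  classical
  refine ⟨1/10, by norm_num, ?_⟩
  intro ε hε0 hεlt
  have hε : ε ≤ 1/10 := hεlt.le
  refine ⟨ε^4/10^6, by positivity, ?_⟩
  intro δ hδ0 hδlt
  have hδs : δ ≤ ε^4/10^6 := hδlt.le
  refine ⟨max 2 (⌈33/ε^2 + 108*(64/(ε^2*δ))^3⌉₊ + 2), ?_⟩
  intro d hd V _ G hreg v p hplo hphi
  classical
  -- numeric facts about d and p
  have hd2 : 2 ≤ d := le_trans (le_max_left _ _) hd
  have hd2' : (2:ℝ) ≤ d := by exact_mod_cast hd2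
  have hd0' : (0:ℝ) < d := by linarith
  have hdR : 33/ε^2 + 108*(64/(ε^2*δ))^3 ≤ (d:ℝ) := by
    have h1 := Nat.le_ceil (33/ε^2 + 108*(64/(ε^2*δ))^3)
    have h2 : (⌈33/ε^2 + 108*(64/(ε^2*δ))^3⌉₊ : ℝ) ≤ ((⌈33/ε^2 + 108*(64/(ε^2*δ))^3⌉₊ + 2 : ℕ) : ℝ) := by
      push_cast; linarith
    have h3 : ((⌈33/ε^2 + 108*(64/(ε^2*δ))^3⌉₊ + 2 : ℕ) : ℝ) ≤ d := by
      exact_mod_cast le_trans (le_max_right _ _) hd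
    linarith
  have hbig : 108*(64/(ε^2*δ))^3 ≤ (d:ℝ) := by
    have : (0:ℝ) ≤ 33/ε^2 := by positivity
    linarith
  have hdε : 1/((d:ℝ) - 1) ≤ ε^2/32 := by
    have hεsq : (0:ℝ) < ε^2 := by positivity
    have h1 : 33/ε^2 ≤ (d:ℝ) := by
      have : (0:ℝ) ≤ 108*(64/(ε^2*δ))^3 := by positivity
      linarith
    have h2 : 32/ε^2 + 1 ≤ (d:ℝ) := by
      have hε1 : ε^2 ≤ 1 := by nlinarith
      have : 32/ε^2 + 1 ≤ 33/ε^2 := by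
        rw [div_add' _ _ _ (ne_of_gt hεsq), div_le_div_iff₀ hεsq hεsq]
        nlinarith
      linarith
    have h3 : (0:ℝ) < (d:ℝ) - 1 := by
      have := div_pos (by norm_num : (0:ℝ) < 32) hεsq
      linarith
    rw [div_le_div_iff₀ h3 (by norm_num : (0:ℝ) < 32)]
    have : 32/ε^2 ≤ (d:ℝ) - 1 := by linarith
    calc (1:ℝ)*32 = 32 := by ring
      _ ≤ ε^2 * ((d:ℝ)-1) := by
          rw [div_le_iff₀ hεsq] at this
          nlinarith
  have hδε2 : δ ≤ ε^2/192 := by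
    have hε1 : ε^2 ≤ 1 := by nlinarith
    have : ε^4 ≤ ε^2 := by nlinarith
    nlinarith
  have hδ1 : δ ≤ 1 := by nlinarith [hδε2]
  have hp0 : 0 ≤ p := le_trans (div_nonneg (by nlinarith) hd0'.le) hplo
  have hp1' : p ≤ 1 := by
    apply le_trans hphi
    rw [div_le_one hd0']
    have : (2:ℝ) ≤ d := by exact_mod_cast hd2
    linarith
  have hdeg : ∀ x : V, G.degree x = d := by
    intro x
    have h := hreg x
    rwa [Set.ncard_eq_toFinset_card', Set.toFinset_card,
      SimpleGraph.card_neighborSet_eq_degree] at h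
  have hNv : (G.neighborFinset v).card = d := hdeg v
  set Nv := G.neighborFinset v with hNvdef
  set TT : Finset (Finset V × Finset V × Finset (Sym2 V)) :=
    (Nv.powerset ×ˢ (Finset.univ : Finset V).powerset ×ˢ G.edgeFinset.powerset).filter
      (fun t => ((t.1.card:ℝ) ≤ δ^2*d) ∧ (δ*d ≤ (t.2.1.card:ℝ)) ∧ ((t.2.1.card:ℝ) ≤ 2*δ*d) ∧
        (t.2.2.card ≤ t.2.1.card) ∧ t.1 ⊆ t.2.1 ∧ (∀ e ∈ t.2.2, ∀ x ∈ e, x ∈ t.2.1) ∧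
        (∀ x ∈ t.2.1, ∃ r ∈ t.1,
          (SimpleGraph.fromEdgeSet ((t.2.2 : Finset (Sym2 V)) : Set (Sym2 V))).Reachable r x))
    with hTTdef
  set Bf : (Finset V × Finset V × Finset (Sym2 V)) → SimpleGraph V → Prop :=
    fun t H => (↑t.2.2 : Set (Sym2 V)) ⊆ H.edgeSet ∧
      Disjoint H.edgeSet (↑(bdryFin G.edgeFinset t.2.1) : Set (Sym2 V)) with hBfdef
  have hwitness : ∀ F ∈ G.edgeFinset.powerset,
      (∃ U : Set V, U ⊆ G.neighborSet v ∧ (U.ncard : ℝ) ≤ δ ^ 2 * (d : ℝ) ∧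
        δ * (d : ℝ) ≤ (((⋃ u ∈ U, ((SimpleGraph.fromEdgeSet
          (↑F : Set (Sym2 V))).connectedComponentMk u).supp)).ncard : ℝ) ∧
        (((⋃ u ∈ U, ((SimpleGraph.fromEdgeSet
          (↑F : Set (Sym2 V))).connectedComponentMk u).supp)).ncard : ℝ) ≤ 2 * δ * (d : ℝ)) →
      ∃ t ∈ TT, Bf t (SimpleGraph.fromEdgeSet (↑F : Set (Sym2 V))) := by
    intro F hF hA
    obtain ⟨U, hUN, hUcard, hlow, hhigh⟩ := hA
    have hFE : F ⊆ G.edgeFinset := Finset.mem_powerset.mp hF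
    have hHedge : (SimpleGraph.fromEdgeSet (↑F : Set (Sym2 V))).edgeSet = ↑F :=
      edgeSet_fromEdgeSet_of_subset hFE
    set H := SimpleGraph.fromEdgeSet (↑F : Set (Sym2 V)) with hHdef
    set Sset : Set V := ⋃ u ∈ U, (H.connectedComponentMk u).supp with hSsetdef
    have hSmem : ∀ x, x ∈ Sset ↔ ∃ u ∈ U, H.Reachable u x := by
      intro x
      rw [hSsetdef]
      simp only [Set.mem_iUnion, SimpleGraph.ConnectedComponent.mem_supp_iff]
      constructor
      · rintro ⟨u, hu, h⟩
        exact ⟨u, hu, (SimpleGraph.ConnectedComponent.eq.mp h).symm⟩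
      · rintro ⟨u, hu, h⟩
        exact ⟨u, hu, SimpleGraph.ConnectedComponent.eq.mpr h.symm⟩
    set R : Finset V := (Set.toFinite U).toFinset with hRdef
    set S : Finset V := (Set.toFinite Sset).toFinset with hSdef
    have hRmem : ∀ x, x ∈ R ↔ x ∈ U := fun x => Set.Finite.mem_toFinset _
    have hSmem' : ∀ x, x ∈ S ↔ x ∈ Sset := fun x => Set.Finite.mem_toFinset _
    have hRcard : R.card = U.ncard := (Set.ncard_eq_toFinset_card U (Set.toFinite U)).symm
    have hScard : S.card = Sset.ncard := (Set.ncard_eq_toFinset_card _ _).symm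
    have hRS : R ⊆ S := by
      intro u hu
      rw [hRmem] at hu
      rw [hSmem', hSmem]
      exact ⟨u, hu, SimpleGraph.Reachable.refl u⟩
    have hwalkmem : ∀ (u x : V) (w : H.Walk u x), u ∈ U → ∀ y ∈ w.support, y ∈ S := by
      intro u x w hu y hy
      rw [hSmem', hSmem]
      exact ⟨u, hu, ⟨w.takeUntil y hy⟩⟩
    have hconn : ∀ x ∈ S, ∃ r ∈ R, ∃ w : H.Walk r x, ∀ y ∈ w.support, y ∈ S := by
      intro x hx
      rw [hSmem', hSmem] at hx
      obtain ⟨u, hu, hr⟩ := hx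
      obtain ⟨w⟩ := hr
      exact ⟨u, (hRmem u).mpr hu, w, hwalkmem u x w hu⟩
    obtain ⟨P, hPedge, hPcard, hPin, hPreach⟩ := extract H R (S \ R).card S le_rfl hRS hconn
    have hPF : P ⊆ F := by
      intro e he
      have h := hPedge e he
      rw [hHedge] at h
      exact Finset.mem_coe.mp h
    refine ⟨(R, S, P), ?_, ?_⟩
    · rw [hTTdef, Finset.mem_filter]
      refine ⟨Finset.mem_product.mpr ⟨?_, Finset.mem_product.mpr ⟨?_, ?_⟩⟩, ?_⟩
      · rw [Finset.mem_powerset]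
        intro x hx
        rw [hNvdef, SimpleGraph.mem_neighborFinset]
        exact hUN ((hRmem x).mp hx)
      · exact Finset.mem_powerset.mpr (Finset.subset_univ S)
      · exact Finset.mem_powerset.mpr (hPF.trans hFE)
      · refine ⟨?_, ?_, ?_, ?_, hRS, hPin, hPreach⟩
        · rw [hRcard]; exact hUcard
        · rw [hScard]; exact hlow
        · rw [hScard]; exact hhigh
        · show P.card ≤ S.card
          omega
    · constructor
      · show (↑P : Set (Sym2 V)) ⊆ H.edgeSet
        rw [hHedge]
        exact_mod_cast hPF
      · show Disjoint H.edgeSet (↑(bdryFin G.edgeFinset S) : Set (Sym2 V))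
        rw [hHedge]
        rw [Finset.disjoint_coe, Finset.disjoint_left]
        intro e heF hebd
        obtain ⟨heE, a, b, hab, haS, hbS⟩ := mem_bdryFin.mp hebd
        have hadj : H.Adj a b := by
          rw [← SimpleGraph.mem_edgeSet, hHedge]
          exact Finset.mem_coe.mpr (hab ▸ heF)
        obtain ⟨u, hu, hua⟩ := (hSmem a).mp ((hSmem' a).mp haS)
        have hb : b ∈ Sset := (hSmem b).mpr ⟨u, hu, hua.trans hadj.reachable⟩
        exact hbS ((hSmem' b).mpr hb)
  refine le_trans (percProb_union_bound G p hp0 hp1' TT _ Bf hwitness) ?_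
  -- evaluate the cylinder probabilities
  have hcylval : ∀ t ∈ TT, percProb G p (Bf t)
      = p ^ t.2.2.card * (1-p) ^ ((bdryFin G.edgeFinset t.2.1).card) := by
    intro t ht
    rw [hTTdef, Finset.mem_filter] at ht
    obtain ⟨hmem, hcond⟩ := ht
    obtain ⟨h1, h2, h3, h4, h5, h6, h7⟩ := hcond
    have hPE : t.2.2 ⊆ G.edgeFinset :=
      Finset.mem_powerset.mp (Finset.mem_product.mp (Finset.mem_product.mp hmem).2).2
    have hdisj : Disjoint t.2.2 (bdryFin G.edgeFinset t.2.1) := by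
      rw [Finset.disjoint_left]
      intro e heP hebd
      obtain ⟨_, a, b, hab, haS, hbS⟩ := mem_bdryFin.mp hebd
      exact hbS (h6 e heP b (by rw [hab]; simp))
    rw [hBfdef]
    exact percProb_cyl G p t.2.2 (bdryFin G.edgeFinset t.2.1) hPE bdryFin_subset hdisj
  rw [Finset.sum_congr rfl hcylval]
  have h2δ : 2*δ ≤ 1 := by nlinarith
  -- replace boundary size by its lower bound
  have hbound1 : ∀ t ∈ TT, p ^ t.2.2.card * (1-p) ^ ((bdryFin G.edgeFinset t.2.1).card)
      ≤ p ^ t.2.2.card * (1-p) ^ (t.2.1.card * (d - t.2.1.card)) := by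
    intro t _
    apply mul_le_mul_of_nonneg_left _ (pow_nonneg hp0 _)
    exact pow_le_pow_of_le_one (by linarith) (by linarith) (bdryFin_card_ge G hdeg)
  -- fibre the sum over (R, |S|, |P|)
  set Ks := Nv.powerset.filter (fun R => ((R.card:ℝ) ≤ δ^2*d)) with hKsdef
  set K := Ks ×ˢ (Finset.range (d+1) ×ˢ Finset.range (d+1)) with hKdef
  have hmaps : ∀ t ∈ TT, ((t.1, (t.2.1.card, t.2.2.card)) :
      Finset V × ℕ × ℕ) ∈ K := by
    intro t ht
    rw [hTTdef, Finset.mem_filter] at ht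
    obtain ⟨hmem, h1, h2, h3, h4, _⟩ := ht
    have hR : t.1 ∈ Nv.powerset := (Finset.mem_product.mp hmem).1
    have hsd : t.2.1.card ≤ d := by
      have : (t.2.1.card : ℝ) ≤ d := by nlinarith
      exact_mod_cast this
    rw [hKdef, Finset.mem_product]
    refine ⟨?_, Finset.mem_product.mpr ⟨?_, ?_⟩⟩
    · rw [hKsdef, Finset.mem_filter]
      exact ⟨hR, h1⟩
    · rw [Finset.mem_range]
      show t.2.1.card < d + 1
      omega
    · rw [Finset.mem_range]
      show t.2.2.card < d + 1
      omega
  have hfiber : ∀ k ∈ K,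
      (∑ t ∈ TT.filter (fun t => ((t.1, (t.2.1.card, t.2.2.card)) :
          Finset V × ℕ × ℕ) = k), p ^ t.2.2.card * (1-p) ^ (t.2.1.card * (d - t.2.1.card)))
      ≤ Real.exp (-(ε^2/16)*(δ*d)) := by
    intro k _
    rcases k with ⟨R, s, ℓ⟩
    rcases Finset.eq_empty_or_nonempty (TT.filter (fun t => ((t.1, (t.2.1.card, t.2.2.card)) :
        Finset V × ℕ × ℕ) = (R, s, ℓ))) with hemp | ⟨t₀, ht₀⟩
    · rw [hemp, Finset.sum_empty]
      exact (Real.exp_pos _).le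
    · obtain ⟨ht₀TT, ht₀key⟩ := Finset.mem_filter.mp ht₀
      have ht₀1 : t₀.1 = R := congrArg Prod.fst ht₀key
      have hs0 : t₀.2.1.card = s := congrArg (fun z => z.2.1) ht₀key
      have hl0 : t₀.2.2.card = ℓ := congrArg (fun z => z.2.2) ht₀key
      have ht₀cond := (Finset.mem_filter.mp (hTTdef ▸ ht₀TT)).2
      obtain ⟨hc1, hc2, hc3, hc4, hc5, hc6, hc7⟩ := ht₀cond
      have hslow : δ*d ≤ (s:ℝ) := by rw [← hs0]; exact hc2
      have hshigh : (s:ℝ) ≤ 2*δ*d := by rw [← hs0]; exact hc3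
      have hℓs : ℓ ≤ s := by rw [← hs0, ← hl0]; exact hc4
      have hsd : s ≤ d := by
        have : (s:ℝ) ≤ (d:ℝ) := by nlinarith
        exact_mod_cast this
      have hsum_eq : (∑ t ∈ TT.filter (fun t => ((t.1, (t.2.1.card, t.2.2.card)) :
          Finset V × ℕ × ℕ) = (R, s, ℓ)), p ^ t.2.2.card * (1-p) ^ (t.2.1.card * (d - t.2.1.card)))
          = ∑ _t ∈ TT.filter (fun t => ((t.1, (t.2.1.card, t.2.2.card)) :
          Finset V × ℕ × ℕ) = (R, s, ℓ)), p ^ ℓ * (1-p) ^ (s * (d - s)) := by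
        apply Finset.sum_congr rfl
        intro t ht
        have hkey := (Finset.mem_filter.mp ht).2
        have h1 : t.2.1.card = s := congrArg (fun z => z.2.1) hkey
        have h2 : t.2.2.card = ℓ := congrArg (fun z => z.2.2) hkey
        rw [h1, h2]
      rw [hsum_eq, Finset.sum_const, nsmul_eq_mul]
      set fib := TT.filter (fun t => ((t.1, (t.2.1.card, t.2.2.card)) :
          Finset V × ℕ × ℕ) = (R, s, ℓ)) with hfibdef
      set W := fib.image (fun t => (t.2.1, t.2.2)) with hWdef
      have hWcard : W.card = fib.card := by
        rw [hWdef]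
        apply Finset.card_image_of_injOn
        intro t ht t' ht' heq
        have hkey := (Finset.mem_filter.mp ht).2
        have hkey' := (Finset.mem_filter.mp ht').2
        have h1 : t.1 = R := congrArg Prod.fst hkey
        have h1' : t'.1 = R := congrArg Prod.fst hkey'
        have h2 : t.2.1 = t'.2.1 := congrArg Prod.fst heq
        have h3 : t.2.2 = t'.2.2 := congrArg Prod.snd heq
        exact Prod.ext (h1.trans h1'.symm) (Prod.ext h2 h3)
      have hWprop : ∀ w ∈ W, w.1.card = s ∧ w.2.card = ℓ ∧ w.2 ⊆ G.edgeFinset ∧ R ⊆ w.1 ∧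
          (∀ e ∈ w.2, ∀ x ∈ e, x ∈ w.1) ∧
          (∀ x ∈ w.1, ∃ r ∈ R, (SimpleGraph.fromEdgeSet
            (↑w.2 : Set (Sym2 V))).Reachable r x) := by
        intro w hw
        rw [hWdef] at hw
        obtain ⟨t, ht, rfl⟩ := Finset.mem_image.mp hw
        obtain ⟨htTT, hkey⟩ := Finset.mem_filter.mp ht
        have h1 : t.1 = R := congrArg Prod.fst hkey
        have h2 : t.2.1.card = s := congrArg (fun z => z.2.1) hkey
        have h3 : t.2.2.card = ℓ := congrArg (fun z => z.2.2) hkey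
        have hcond := (Finset.mem_filter.mp (hTTdef ▸ htTT)).2
        have hmem := (Finset.mem_filter.mp (hTTdef ▸ htTT)).1
        obtain ⟨_, _, _, _, g5, g6, g7⟩ := hcond
        refine ⟨h2, h3, ?_, ?_, g6, ?_⟩
        · exact Finset.mem_powerset.mp (Finset.mem_product.mp (Finset.mem_product.mp hmem).2).2
        · rw [← h1]; exact g5
        · intro x hx
          obtain ⟨r, hr, hrx⟩ := g7 x hx
          exact ⟨r, by rw [← h1]; exact hr, hrx⟩
      have hq1 : 1/(d:ℝ) ≤ 1 := by
        rw [div_le_one hd0']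
        linarith
      have hwc := witness_count G (1/(d:ℝ)) (by positivity) hq1 hdeg R W hWprop
      have hnum := num_core d s ℓ ε δ p hd2 hε0 hε hδ0 hδε2 hdε hshigh hsd hℓs hplo hphi
      have hfibcast : (fib.card : ℝ) = (W.card : ℝ) := by rw [hWcard]
      calc (fib.card:ℝ) * (p ^ ℓ * (1-p) ^ (s * (d - s)))
          = (W.card:ℝ) * (p ^ ℓ * (1-p) ^ (s * (d - s))) := by rw [hfibcast]
        _ ≤ (W.card:ℝ) * (Real.exp (-(ε^2/16)*s) * ((1/(d:ℝ))^ℓ * (1-1/(d:ℝ))^(s*d))) := by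
            apply mul_le_mul_of_nonneg_left hnum (Nat.cast_nonneg _)
        _ = Real.exp (-(ε^2/16)*s) * ((W.card:ℝ) * ((1/(d:ℝ))^ℓ * (1-1/(d:ℝ))^(s*d))) := by
            ring
        _ ≤ Real.exp (-(ε^2/16)*s) * 1 := by
            apply mul_le_mul_of_nonneg_left hwc (Real.exp_nonneg _)
        _ = Real.exp (-(ε^2/16)*s) := mul_one _
        _ ≤ Real.exp (-(ε^2/16)*(δ*d)) := by
            apply Real.exp_le_exp.mpr
            have hc0 : (0:ℝ) ≤ ε^2/16 := by positivity
            nlinarith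
  calc ∑ t ∈ TT, p ^ t.2.2.card * (1-p) ^ ((bdryFin G.edgeFinset t.2.1).card)
      ≤ ∑ t ∈ TT, p ^ t.2.2.card * (1-p) ^ (t.2.1.card * (d - t.2.1.card)) :=
        Finset.sum_le_sum hbound1
    _ = ∑ k ∈ K, ∑ t ∈ TT.filter (fun t => ((t.1, (t.2.1.card, t.2.2.card)) :
          Finset V × ℕ × ℕ) = k), p ^ t.2.2.card * (1-p) ^ (t.2.1.card * (d - t.2.1.card)) :=
        (Finset.sum_fiberwise_of_maps_to hmaps _).symm
    _ ≤ ∑ _k ∈ K, Real.exp (-(ε^2/16)*(δ*d)) := Finset.sum_le_sum hfiber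
    _ = (K.card:ℝ) * Real.exp (-(ε^2/16)*(δ*d)) := by rw [Finset.sum_const, nsmul_eq_mul]
    _ ≤ Real.exp (-(δ^2*(d:ℝ))) := by
        have hKcard : K.card = Ks.card * ((d+1) * (d+1)) := by
          rw [hKdef, Finset.card_product, Finset.card_product, Finset.card_range]
        set M := ⌊δ^2*(d:ℝ)⌋₊ with hMdef
        have hQle : ∀ R ∈ Nv.powerset, ((R.card:ℝ) ≤ δ^2*d) → R.card ≤ M := by
          intro R _ hR
          exact Nat.le_floor hR
        have hcount := count_small_subsets Nv (δ^2) (by positivity) (by nlinarith)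
          (fun R => ((R.card:ℝ) ≤ δ^2*d)) M hQle
        rw [hNv] at hcount
        have hfin := final_numeric d M ε δ (Ks.card:ℝ) hε0 hε hδ0 hδs
          (Nat.floor_le (by positivity)) (by linarith) hbig (Nat.cast_nonneg _) ?hc
        case hc => exact hcount
        calc (K.card:ℝ) * Real.exp (-(ε^2/16)*(δ*d))
            = (Ks.card:ℝ) * ((d:ℝ)+1)^2 * Real.exp (-(ε^2/16)*(δ*d)) := by
              rw [hKcard]
              push_cast
              ring
          _ ≤ Real.exp (-(δ^2*(d:ℝ))) := hfin
end

section
/- Let G be a graph on n vertices with maximum degree at most d, where d ≥ 1, let p ∈ [0,1], and let k ≥ 1 be an integer. Then the probability that the percolated random subgraph G_p contains a connected component of order at least k is at most n·(e·d·p)^{k−1}. -/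
open scoped Classical

namespace CompBound

variable {V : Type} [Fintype V]

lemma sum_pow_card {α : Type*} (s : Finset α) (p q : ℝ) :
    ∑ F ∈ s.powerset, p ^ F.card * q ^ (s.card - F.card) = (p + q) ^ s.card := by
  classical
  rw [← Finset.prod_const, Finset.prod_add]
  refine Finset.sum_congr rfl fun t ht => ?_
  rw [Finset.prod_const, Finset.prod_const, Finset.card_sdiff_of_subset (Finset.mem_powerset.mp ht)]

lemma sum_superset {α : Type*} (E E0 : Finset α) (h : E0 ⊆ E) (p : ℝ) :
    ∑ F ∈ E.powerset, (if E0 ⊆ F then p ^ F.card * (1 - p) ^ (E.card - F.card) else 0)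
      = p ^ E0.card := by
  classical
  rw [Finset.sum_ite, Finset.sum_const_zero, add_zero]
  have key : ∑ F ∈ E.powerset.filter (fun F => E0 ⊆ F),
      p ^ F.card * (1 - p) ^ (E.card - F.card)
      = ∑ F' ∈ (E \ E0).powerset, p ^ (F'.card + E0.card) * (1 - p) ^ ((E \ E0).card - F'.card) := by
    refine Finset.sum_nbij' (fun F => F \ E0) (fun F' => F' ∪ E0) ?_ ?_ ?_ ?_ ?_
    · intro F hF
      simp only [Finset.mem_filter, Finset.mem_powerset] at hF
      exact Finset.mem_powerset.mpr (Finset.sdiff_subset_sdiff hF.1 (le_refl _))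
    · intro F' hF'
      simp only [Finset.mem_powerset] at hF'
      simp only [Finset.mem_filter, Finset.mem_powerset]
      exact ⟨Finset.union_subset (hF'.trans Finset.sdiff_subset) h, Finset.subset_union_right⟩
    · intro F hF
      simp only [Finset.mem_filter, Finset.mem_powerset] at hF
      exact Finset.sdiff_union_of_subset hF.2
    · intro F' hF'
      simp only [Finset.mem_powerset] at hF'
      have hd : Disjoint F' E0 := by
        refine Finset.disjoint_left.mpr fun a haF' haE0 => ?_
        exact (Finset.mem_sdiff.mp (hF' haF')).2 haE0
      show (F' ∪ E0) \ E0 = F'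
      rw [Finset.union_sdiff_right, Finset.sdiff_eq_self_iff_disjoint.mpr hd]
    · intro F hF
      simp only [Finset.mem_filter, Finset.mem_powerset] at hF
      have h1 : (F \ E0).card = F.card - E0.card := Finset.card_sdiff_of_subset hF.2
      have h2 : (E \ E0).card = E.card - E0.card := Finset.card_sdiff_of_subset h
      have hle : E0.card ≤ F.card := Finset.card_le_card hF.2
      have hFE : F.card ≤ E.card := Finset.card_le_card hF.1
      have e1 : F.card = (F \ E0).card + E0.card := by omega
      have e2 : E.card - F.card = (E \ E0).card - (F \ E0).card := by omega
      rw [← e1, ← e2]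
  rw [key]
  have : ∀ F' ∈ (E \ E0).powerset, p ^ (F'.card + E0.card) * (1 - p) ^ ((E \ E0).card - F'.card)
      = p ^ E0.card * (p ^ F'.card * (1 - p) ^ ((E \ E0).card - F'.card)) := by
    intro F' _; ring
  rw [Finset.sum_congr rfl this, ← Finset.mul_sum, sum_pow_card]
  norm_num

lemma pow_self_div_factorial_le (m : ℕ) : (m : ℝ) ^ m / (Nat.factorial m : ℝ) ≤ Real.exp 1 ^ m := by
  induction m with
  | zero => simp
  | succ n ih =>
    have hfac : (0:ℝ) < (Nat.factorial n : ℝ) := by positivity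
    have key : ((n:ℝ) + 1) ^ n ≤ Real.exp 1 * (n:ℝ) ^ n := by
      rcases Nat.eq_zero_or_pos n with h0 | hpos
      · subst h0; simpa using Real.one_le_exp (by norm_num)
      · have hn : (0:ℝ) < n := by exact_mod_cast hpos
        have h1 : (n:ℝ) + 1 = (1 + 1/(n:ℝ)) * n := by field_simp
        have h2 : (1 + 1/(n:ℝ)) ≤ Real.exp (1/(n:ℝ)) := by
          have := Real.add_one_le_exp (1/(n:ℝ)); linarith
        have h3 : (1 + 1/(n:ℝ)) ^ n ≤ Real.exp (1/(n:ℝ)) ^ n :=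
          pow_le_pow_left₀ (by positivity) h2 n
        have h4 : Real.exp (1/(n:ℝ)) ^ n = Real.exp 1 := by
          rw [← Real.exp_nat_mul]; congr 1; field_simp
        calc ((n:ℝ) + 1) ^ n = (1 + 1/(n:ℝ)) ^ n * (n:ℝ) ^ n := by rw [h1, mul_pow]
          _ ≤ Real.exp 1 * (n:ℝ) ^ n := by
              refine mul_le_mul_of_nonneg_right ?_ (by positivity)
              rw [← h4]; exact h3
    have hstep : ((n:ℝ) + 1) ^ (n+1) / (Nat.factorial (n+1) : ℝ)
        = ((n:ℝ) + 1) ^ n / (Nat.factorial n : ℝ) := by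
      rw [Nat.factorial_succ]
      push_cast
      rw [pow_succ]
      field_simp
    push_cast
    rw [hstep]
    calc ((n:ℝ) + 1) ^ n / (Nat.factorial n : ℝ)
        ≤ Real.exp 1 * ((n:ℝ) ^ n / (Nat.factorial n : ℝ)) := by
          rw [← mul_div_assoc]
          gcongr
      _ ≤ Real.exp 1 * Real.exp 1 ^ n := by
          exact mul_le_mul_of_nonneg_left ih (Real.exp_pos 1).le
      _ = Real.exp 1 ^ (n+1) := by ring

lemma choose_le_exp_pow (d m : ℕ) : ((d*m).choose m : ℝ) ≤ (Real.exp 1 * d) ^ m := by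
  have h1 : ((d*m).choose m : ℝ) ≤ ((d*m : ℕ) : ℝ) ^ m / (Nat.factorial m : ℝ) :=
    Nat.choose_le_pow_div m (d*m)
  have h2 : ((d*m : ℕ) : ℝ) ^ m / (Nat.factorial m : ℝ)
      = (d:ℝ)^m * ((m:ℝ)^m / (Nat.factorial m : ℝ)) := by
    push_cast; rw [mul_pow]; ring
  calc ((d*m).choose m : ℝ) ≤ (d:ℝ)^m * ((m:ℝ)^m / (Nat.factorial m : ℝ)) := by rw [← h2]; exact h1
    _ ≤ (d:ℝ)^m * Real.exp 1 ^ m := by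
        exact mul_le_mul_of_nonneg_left (pow_self_div_factorial_le m) (by positivity)
    _ = (Real.exp 1 * d) ^ m := by rw [mul_pow]; ring


noncomputable def nbrL (G : SimpleGraph V) (u : V) : List V :=
  (Set.toFinite (G.neighborSet u)).toFinset.toList

lemma mem_nbrL {G : SimpleGraph V} {u w : V} : w ∈ nbrL G u ↔ G.Adj u w := by
  simp [nbrL, Set.Finite.mem_toFinset]

lemma length_nbrL (G : SimpleGraph V) (u : V) :
    (nbrL G u).length = (G.neighborSet u).ncard := by
  rw [nbrL, Finset.length_toList, Set.ncard_eq_toFinset_card]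

noncomputable def nb (G : SimpleGraph V) (u : V) (j : ℕ) : Option V := (nbrL G u)[j]?

noncomputable def step (G : SimpleGraph V) (d : ℕ) :
    (List V × List (Sym2 V)) → ℕ → (List V × List (Sym2 V)) :=
  fun σ c =>
    match σ.1[c / d]? with
    | none => σ
    | some u =>
      match nb G u (c % d) with
      | none => σ
      | some w => (σ.1 ++ [w], σ.2 ++ [s(u, w)])

lemma step_eq {G : SimpleGraph V} {d : ℕ} {us : List V} {es : List (Sym2 V)} {c i j : ℕ}
    {u w : V} (hc : c = d * i + j) (hj : j < d) (hu : us[i]? = some u)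
    (hw : nb G u j = some w) :
    step G d (us, es) c = (us ++ [w], es ++ [s(u, w)]) := by
  have hd : 0 < d := by omega
  have hdiv : c / d = i := by rw [hc, Nat.mul_add_div hd, Nat.div_eq_of_lt hj, add_zero]
  have hmod : c % d = j := by rw [hc, Nat.mul_add_mod, Nat.mod_eq_of_lt hj]
  simp only [step, hdiv, hmod, hu, hw]

structure Build (G : SimpleGraph V) (d : ℕ) (F : Finset (Sym2 V)) (v : V) (m : ℕ) where
  ps : List ℕ
  us : List V
  es : List (Sym2 V)
  sorted : ps.Pairwise (· < ·)
  lenps : ps.length = m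
  bound : ∀ c ∈ ps, c < d * m
  lenus : us.length = m + 1
  usnodup : us.Nodup
  vmem : v ∈ us
  comp : ∀ u ∈ us, (SimpleGraph.fromEdgeSet (↑F : Set (Sym2 V))).connectedComponentMk u
          = (SimpleGraph.fromEdgeSet (↑F : Set (Sym2 V))).connectedComponentMk v
  fold : List.foldl (step G d) ([v], []) ps = (us, es)
  esnodup : es.Nodup
  lenes : es.length = m
  esF : ∀ e ∈ es, e ∈ F
  ends : ∀ e ∈ es, ∃ a b, e = s(a, b) ∧ a ∈ us ∧ b ∈ us
  inv : ∀ c', (∃ c ∈ ps, c' ≤ c) → ∀ i j u w, c' = d * i + j → j < d →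
        us[i]? = some u → nb G u j = some w → s(u, w) ∈ F → w ∈ us

def Build.base (G : SimpleGraph V) (d : ℕ) (F : Finset (Sym2 V)) (v : V) :
    Build G d F v 0 where
  ps := []
  us := [v]
  es := []
  sorted := List.Pairwise.nil
  lenps := rfl
  bound := by simp
  lenus := rfl
  usnodup := List.nodup_singleton v
  vmem := List.mem_singleton_self v
  comp := by
    intro u hu
    rw [List.mem_singleton] at hu
    subst hu
    rfl
  fold := rfl
  esnodup := List.nodup_nil
  lenes := rfl
  esF := by simp
  ends := by simp
  inv := by simp

lemma Build.extend {G : SimpleGraph V} {d : ℕ}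
    (hdeg : ∀ u : V, (G.neighborSet u).ncard ≤ d)
    {F : Finset (Sym2 V)} (hF : F ⊆ G.edgeFinset) {v : V} {m : ℕ}
    (B : Build G d F v m)
    (hm : m + 2 ≤
      ((SimpleGraph.fromEdgeSet (↑F : Set (Sym2 V))).connectedComponentMk v).supp.ncard) :
    Nonempty (Build G d F v (m + 1)) := by
  classical
  set H := SimpleGraph.fromEdgeSet (↑F : Set (Sym2 V)) with hH
  set S : Set V := {y | y ∈ B.us} with hS
  -- find a vertex of the component outside us
  have hx : ∃ x ∈ (H.connectedComponentMk v).supp, x ∉ B.us := by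
    by_contra hcon
    push_neg at hcon
    have hsub : (H.connectedComponentMk v).supp ⊆ ↑B.us.toFinset := by
      intro y hy
      simpa using hcon y hy
    have := Set.ncard_le_ncard hsub (Finset.finite_toSet _)
    rw [Set.ncard_coe_finset] at this
    have hcard : B.us.toFinset.card ≤ B.us.length := B.us.toFinset_card_le
    have hlen := B.lenus
    omega
  obtain ⟨x, hxsupp, hxus⟩ := hx
  have hreach : H.Reachable v x := by
    rw [SimpleGraph.ConnectedComponent.mem_supp_iff] at hxsupp
    exact (SimpleGraph.ConnectedComponent.exact hxsupp).symm
  obtain ⟨p⟩ := hreach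
  obtain ⟨dt, _, hdtS, hdtnS⟩ := p.exists_boundary_dart S B.vmem hxus
  have hadj : (SimpleGraph.fromEdgeSet (↑F : Set (Sym2 V))).Adj dt.fst dt.snd := dt.adj
  rw [SimpleGraph.fromEdgeSet_adj] at hadj
  obtain ⟨hedge, hne⟩ := hadj
  have hedgeF : s(dt.fst, dt.snd) ∈ F := hedge
  have hGadj : G.Adj dt.fst dt.snd := by
    have := hF hedgeF
    rw [SimpleGraph.mem_edgeFinset, SimpleGraph.mem_edgeSet] at this
    exact this
  -- find index data
  obtain ⟨i₀, hi₀⟩ := List.mem_iff_getElem?.mp (hdtS : dt.fst ∈ B.us)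
  have hbmem : dt.snd ∈ nbrL G dt.fst := mem_nbrL.mpr hGadj
  obtain ⟨j₀, hj₀⟩ := List.mem_iff_getElem?.mp hbmem
  have hj₀d : j₀ < d := by
    have h1 := (List.getElem?_eq_some_iff.mp hj₀).1
    have h2 := (length_nbrL G dt.fst).le.trans (hdeg dt.fst)
    omega
  -- minimal valid-new code
  set A : ℕ → Prop := fun c => ∃ i j u w, c = d * i + j ∧ j < d ∧ B.us[i]? = some u ∧
      nb G u j = some w ∧ s(u, w) ∈ F ∧ w ∉ B.us with hA
  have hAne : ∃ c, A c := ⟨d * i₀ + j₀, i₀, j₀, dt.fst, dt.snd, rfl, hj₀d, hi₀, hj₀, hedgeF, hdtnS⟩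
  set cm := Nat.find hAne with hcm
  obtain ⟨i1, j1, u1, w1, hdecomp, hj1, hu1, hw1, he1, hw1n⟩ := Nat.find_spec hAne
  have hmin : ∀ c < cm, ¬ A c := fun c hc => Nat.find_min hAne hc
  have hu1mem : u1 ∈ B.us := List.mem_of_getElem? hu1
  have hi1len : i1 < B.us.length := (List.getElem?_eq_some_iff.mp hu1).1
  have hd0 : 0 < d := by omega
  have hdiv : cm / d = i1 := by
    rw [hcm, hdecomp, Nat.mul_add_div hd0, Nat.div_eq_of_lt hj1, add_zero]
  have hmod : cm % d = j1 := by rw [hcm, hdecomp, Nat.mul_add_mod, Nat.mod_eq_of_lt hj1]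
  -- cm greater than all of ps
  have hgt : ∀ c ∈ B.ps, c < cm := by
    intro c hc
    by_contra hle
    push_neg at hle
    exact hw1n (B.inv cm ⟨c, hc, hle⟩ i1 j1 u1 w1 hdecomp hj1 hu1 hw1 he1)
  have hne1 : u1 ≠ w1 := fun h => hw1n (h ▸ hu1mem)
  have hHadj1 : H.Adj u1 w1 := by
    show (SimpleGraph.fromEdgeSet (↑F : Set (Sym2 V))).Adj u1 w1
    rw [SimpleGraph.fromEdgeSet_adj]
    exact ⟨he1, hne1⟩
  refine ⟨⟨B.ps ++ [cm], B.us ++ [w1], B.es ++ [s(u1, w1)], ?_, ?_, ?_, ?_, ?_, ?_, ?_, ?_, ?_,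
    ?_, ?_, ?_, ?_⟩⟩
  · rw [List.pairwise_append]
    exact ⟨B.sorted, List.pairwise_singleton _ _, fun a ha b hb => by
      rw [List.mem_singleton] at hb; exact hb ▸ hgt a ha⟩
  · simp [B.lenps]
  · intro c hc
    rw [List.mem_append, List.mem_singleton] at hc
    rcases hc with hc | hc
    · have := B.bound c hc
      have : d * m ≤ d * (m + 1) := Nat.mul_le_mul_left d (Nat.le_succ m)
      omega
    · subst hc
      have : i1 ≤ m := by have := B.lenus; omega
      calc cm = d * i1 + j1 := hdecomp
        _ < d * i1 + d := by omega
        _ = d * (i1 + 1) := by ring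
        _ ≤ d * (m + 1) := Nat.mul_le_mul_left d (by omega)
  · simp [B.lenus]
  · rw [List.nodup_append]
    exact ⟨B.usnodup, List.nodup_singleton _, by
      intro a ha b hb hab; rw [List.mem_singleton] at hb; subst hb; subst hab; exact hw1n ha⟩
  · exact List.mem_append_left _ B.vmem
  · intro u hu
    rw [List.mem_append, List.mem_singleton] at hu
    rcases hu with hu | hu
    · exact B.comp u hu
    · subst hu
      have h1 : H.connectedComponentMk u = H.connectedComponentMk u1 :=
        SimpleGraph.ConnectedComponent.sound hHadj1.symm.reachable
      rw [h1]
      exact B.comp u1 hu1mem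
  · rw [List.foldl_append, B.fold, List.foldl_cons, List.foldl_nil,
      step_eq hdecomp hj1 hu1 hw1]
  · rw [List.nodup_append]
    refine ⟨B.esnodup, List.nodup_singleton _, ?_⟩
    intro e he e' he' hee
    rw [List.mem_singleton] at he'
    subst he'
    subst hee
    obtain ⟨a, b, hab, haus, hbus⟩ := B.ends _ he
    rw [Sym2.eq_iff] at hab
    rcases hab with ⟨h1, h2⟩ | ⟨h1, h2⟩
    · exact hw1n (h2 ▸ hbus)
    · exact hw1n (h2 ▸ haus)
  · simp [B.lenes]
  · intro e he
    rw [List.mem_append, List.mem_singleton] at he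
    rcases he with he | he
    · exact B.esF e he
    · exact he ▸ he1
  · intro e he
    rw [List.mem_append, List.mem_singleton] at he
    rcases he with he | he
    · obtain ⟨a, b, hab, ha, hb⟩ := B.ends e he
      exact ⟨a, b, hab, List.mem_append_left _ ha, List.mem_append_left _ hb⟩
    · exact ⟨u1, w1, he, List.mem_append_left _ hu1mem, List.mem_append_right _ (by simp)⟩
  · intro c' hex i j u w hc' hj hu hw heF
    -- c' ≤ cm
    have hle : c' ≤ cm := by
      obtain ⟨c, hc, hcc⟩ := hex
      rw [List.mem_append, List.mem_singleton] at hc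
      rcases hc with hc | hc
      · exact hcc.trans (hgt c hc).le
      · exact hc ▸ hcc
    have hidx : i ≤ i1 := by
      have h1 : c' / d = i := by rw [hc', Nat.mul_add_div hd0, Nat.div_eq_of_lt hj, add_zero]
      have h2 : c' / d ≤ cm / d := Nat.div_le_div_right hle
      rw [h1, hdiv] at h2
      exact h2
    have hilen : i < B.us.length := lt_of_le_of_lt hidx hi1len
    have huold : B.us[i]? = some u := by
      rw [List.getElem?_append, if_pos hilen] at hu
      exact hu
    rcases eq_or_lt_of_le hle with heq | hlt
    · -- c' = cm : same slot
      have hieq : i = i1 := by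
        have h1 : c' / d = i := by rw [hc', Nat.mul_add_div hd0, Nat.div_eq_of_lt hj, add_zero]
        rw [heq, hdiv] at h1; exact h1.symm
      have hjeq : j = j1 := by
        have h1 : c' % d = j := by rw [hc', Nat.mul_add_mod, Nat.mod_eq_of_lt hj]
        rw [heq, hmod] at h1; exact h1.symm
      subst hieq; subst hjeq
      have : u = u1 := by rw [huold] at hu1; exact Option.some_inj.mp hu1
      subst this
      have : w = w1 := by rw [hw] at hw1; exact Option.some_inj.mp hw1
      subst this
      exact List.mem_append_right _ (by simp)
    · -- c' < cm : minimality
      have hnA : ¬ (∃ i j u w, c' = d * i + j ∧ j < d ∧ B.us[i]? = some u ∧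
          nb G u j = some w ∧ s(u, w) ∈ F ∧ w ∉ B.us) := hmin c' hlt
      push_neg at hnA
      have hwus : w ∈ B.us := hnA i j u w hc' hj huold hw heF
      exact List.mem_append_left _ hwus


noncomputable def EdL (G : SimpleGraph V) (d : ℕ) (v : V) (W : Finset ℕ) : List (Sym2 V) :=
  ((W.sort (· ≤ ·)).foldl (step G d) ([v], [])).2

lemma exists_witness {G : SimpleGraph V} {d : ℕ}
    (hdeg : ∀ u : V, (G.neighborSet u).ncard ≤ d)
    {F : Finset (Sym2 V)} (hF : F ⊆ G.edgeFinset) {v : V} {k : ℕ} (hk : 1 ≤ k)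
    (hcomp : k ≤
      ((SimpleGraph.fromEdgeSet (↑F : Set (Sym2 V))).connectedComponentMk v).supp.ncard) :
    ∃ W ∈ Finset.powersetCard (k - 1) (Finset.range (d * (k - 1))),
      (EdL G d v W).length = k - 1 ∧ (EdL G d v W).Nodup ∧ ∀ e ∈ EdL G d v W, e ∈ F := by
  have hbuild : ∀ m : ℕ, m + 1 ≤
      ((SimpleGraph.fromEdgeSet (↑F : Set (Sym2 V))).connectedComponentMk v).supp.ncard →
      Nonempty (Build G d F v m) := by
    intro m
    induction m with
    | zero => exact fun _ => ⟨Build.base G d F v⟩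
    | succ n ih =>
      intro h
      obtain ⟨B⟩ := ih (by omega)
      exact B.extend hdeg hF (by omega)
  obtain ⟨B⟩ := hbuild (k - 1) (by omega)
  have hnodup : B.ps.Nodup := B.sorted.nodup
  have hsort : Finset.sort B.ps.toFinset (· ≤ ·) = B.ps :=
    (List.toFinset_sort (· ≤ ·) hnodup).mpr (B.sorted.imp fun h => le_of_lt h)
  have hEdL : EdL G d v B.ps.toFinset = B.es := by
    rw [EdL, hsort, B.fold]
  refine ⟨B.ps.toFinset, ?_, ?_, ?_, ?_⟩
  · rw [Finset.mem_powersetCard]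
    constructor
    · intro c hc
      rw [List.mem_toFinset] at hc
      exact Finset.mem_range.mpr (B.bound c hc)
    · rw [List.toFinset_card_of_nodup hnodup, B.lenps]
  · rw [hEdL, B.lenes]
  · rw [hEdL]; exact B.esnodup
  · rw [hEdL]; exact B.esF


end CompBound

set_option maxHeartbeats 2000000 in
theorem component_order_probability_bound (V : Type) [Fintype V] (G : SimpleGraph V)
    (d : ℕ) (hd : 1 ≤ d)
    -- maximum degree at most `d`
    (hdeg : ∀ v : V, (G.neighborSet v).ncard ≤ d)
    (p : ℝ) (hp0 : 0 ≤ p) (hp1 : p ≤ 1) (k : ℕ) (hk : 1 ≤ k) :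
    percProb G p (fun H => ∃ c : H.ConnectedComponent, k ≤ c.supp.ncard) ≤
      (Fintype.card V : ℝ) * (Real.exp 1 * (d : ℝ) * p) ^ (k - 1) := by
  classical
  set m := k - 1 with hmdef
  set Ω : Finset (Finset ℕ) := Finset.powersetCard m (Finset.range (d * m)) with hΩ
  set wt : Finset (Sym2 V) → ℝ :=
    fun F => p ^ F.card * (1 - p) ^ (G.edgeFinset.card - F.card) with hwt
  have hwt0 : ∀ F, 0 ≤ wt F := fun F =>
    mul_nonneg (pow_nonneg hp0 _) (pow_nonneg (by linarith) _)
  set Cnd : V → Finset ℕ → Finset (Sym2 V) → Prop := fun v W F =>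
    (CompBound.EdL G d v W).length = m ∧ (CompBound.EdL G d v W).Nodup ∧
      (∀ e ∈ CompBound.EdL G d v W, e ∈ G.edgeFinset) ∧
      (∀ e ∈ CompBound.EdL G d v W, e ∈ F) with hCnd
  have hite0 : ∀ v W F, 0 ≤ (if Cnd v W F then wt F else 0) := by
    intro v W F
    by_cases h : Cnd v W F
    · rw [if_pos h]; exact hwt0 F
    · rw [if_neg h]
  have step1 : percProb G p (fun H => ∃ c : H.ConnectedComponent, k ≤ c.supp.ncard)
      ≤ ∑ F ∈ G.edgeFinset.powerset, ∑ v : V, ∑ W ∈ Ω, (if Cnd v W F then wt F else 0) := by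
    rw [percProb]
    refine Finset.sum_le_sum fun F hFmem => ?_
    have hFsub : F ⊆ G.edgeFinset := Finset.mem_powerset.mp hFmem
    by_cases hA : (∃ c : (SimpleGraph.fromEdgeSet (↑F : Set (Sym2 V))).ConnectedComponent,
        k ≤ c.supp.ncard)
    · rw [if_pos hA]
      obtain ⟨c, hc⟩ := hA
      obtain ⟨v0, hv0⟩ := Quot.exists_rep c
      have hc' : k ≤
          ((SimpleGraph.fromEdgeSet (↑F : Set (Sym2 V))).connectedComponentMk v0).supp.ncard := by
        have : (SimpleGraph.fromEdgeSet (↑F : Set (Sym2 V))).connectedComponentMk v0 = c := hv0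
        rw [this]; exact hc
      obtain ⟨W, hWmem, h1, h2, h3⟩ := CompBound.exists_witness hdeg hFsub hk hc'
      have hterm : (if Cnd v0 W F then wt F else 0) = wt F :=
        if_pos ⟨h1, h2, fun e he => hFsub (h3 e he), h3⟩
      have hinner : wt F ≤ ∑ W' ∈ Ω, (if Cnd v0 W' F then wt F else 0) :=
        le_trans (le_of_eq hterm.symm)
          (Finset.single_le_sum (f := fun W' => if Cnd v0 W' F then wt F else 0)
            (fun W' _ => hite0 v0 W' F) hWmem)
      calc wt F ≤ ∑ W' ∈ Ω, (if Cnd v0 W' F then wt F else 0) := hinner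
        _ ≤ ∑ v : V, ∑ W' ∈ Ω, (if Cnd v W' F then wt F else 0) :=
            Finset.single_le_sum (f := fun v => ∑ W' ∈ Ω, (if Cnd v W' F then wt F else 0))
              (fun v _ => Finset.sum_nonneg fun W' _ => hite0 v W' F)
              (Finset.mem_univ v0)
    · rw [if_neg hA]
      exact Finset.sum_nonneg fun v _ => Finset.sum_nonneg fun W' _ => hite0 v W' F
  have step2 : ∑ F ∈ G.edgeFinset.powerset, ∑ v : V, ∑ W ∈ Ω, (if Cnd v W F then wt F else 0)
      = ∑ v : V, ∑ W ∈ Ω, ∑ F ∈ G.edgeFinset.powerset, (if Cnd v W F then wt F else 0) := by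
    rw [Finset.sum_comm]
    exact Finset.sum_congr rfl fun v _ => Finset.sum_comm
  have step3 : ∀ (v : V), ∀ W ∈ Ω,
      ∑ F ∈ G.edgeFinset.powerset, (if Cnd v W F then wt F else 0) ≤ p ^ m := by
    intro v W _
    by_cases hC : (CompBound.EdL G d v W).length = m ∧ (CompBound.EdL G d v W).Nodup ∧
        (∀ e ∈ CompBound.EdL G d v W, e ∈ G.edgeFinset)
    · obtain ⟨hlen, hnd, hsubG⟩ := hC
      have heq : ∀ F ∈ G.edgeFinset.powerset, (if Cnd v W F then wt F else 0)
          = (if (CompBound.EdL G d v W).toFinset ⊆ F then wt F else 0) := by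
        intro F _
        congr 1
        · rw [eq_iff_iff]
          constructor
          · rintro ⟨-, -, -, h4⟩
            intro e he
            exact h4 e (List.mem_toFinset.mp he)
          · intro h4
            exact ⟨hlen, hnd, hsubG, fun e he => h4 (List.mem_toFinset.mpr he)⟩
      have hsub : (CompBound.EdL G d v W).toFinset ⊆ G.edgeFinset :=
        fun e he => hsubG e (List.mem_toFinset.mp he)
      have hcard : (CompBound.EdL G d v W).toFinset.card = m := by
        rw [List.toFinset_card_of_nodup hnd, hlen]
      calc ∑ F ∈ G.edgeFinset.powerset, (if Cnd v W F then wt F else 0)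
          = ∑ F ∈ G.edgeFinset.powerset,
              (if (CompBound.EdL G d v W).toFinset ⊆ F then
                p ^ F.card * (1 - p) ^ (G.edgeFinset.card - F.card) else 0) := by
            refine Finset.sum_congr rfl fun F hFm => ?_
            exact (heq F hFm).trans rfl
        _ = p ^ (CompBound.EdL G d v W).toFinset.card := by
            have hss := CompBound.sum_superset G.edgeFinset (CompBound.EdL G d v W).toFinset hsub p
            convert hss using 4
        _ = p ^ m := by rw [hcard]
        _ ≤ p ^ m := le_rfl
    · have : ∀ F ∈ G.edgeFinset.powerset, (if Cnd v W F then wt F else 0) = 0 := by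
        intro F _
        rw [if_neg]
        intro hCnd'
        exact hC ⟨hCnd'.1, hCnd'.2.1, hCnd'.2.2.1⟩
      rw [Finset.sum_congr rfl this, Finset.sum_const_zero]
      positivity
  have step4 : ∑ v : V, ∑ W ∈ Ω, ∑ F ∈ G.edgeFinset.powerset, (if Cnd v W F then wt F else 0)
      ≤ (Fintype.card V : ℝ) * (((d * m).choose m : ℝ) * p ^ m) := by
    calc ∑ v : V, ∑ W ∈ Ω, ∑ F ∈ G.edgeFinset.powerset, (if Cnd v W F then wt F else 0)
        ≤ ∑ _v : V, ∑ _W ∈ Ω, p ^ m :=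
          Finset.sum_le_sum fun v _ => Finset.sum_le_sum fun W hW => step3 v W hW
      _ = (Fintype.card V : ℝ) * (((d * m).choose m : ℝ) * p ^ m) := by
          rw [Finset.sum_const, Finset.sum_const, Finset.card_univ, hΩ,
            Finset.card_powersetCard, Finset.card_range]
          simp [nsmul_eq_mul, mul_assoc]
  have step5 : (Fintype.card V : ℝ) * (((d * m).choose m : ℝ) * p ^ m)
      ≤ (Fintype.card V : ℝ) * (Real.exp 1 * (d : ℝ) * p) ^ m := by
    have h1 : ((d * m).choose m : ℝ) * p ^ m ≤ (Real.exp 1 * d) ^ m * p ^ m :=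
      mul_le_mul_of_nonneg_right (CompBound.choose_le_exp_pow d m) (pow_nonneg hp0 m)
    have h2 : (Real.exp 1 * (d:ℝ) * p) ^ m = (Real.exp 1 * (d:ℝ)) ^ m * p ^ m := by
      rw [mul_pow]
    refine mul_le_mul_of_nonneg_left ?_ (by positivity)
    rw [h2]; exact h1
  calc percProb G p (fun H => ∃ c : H.ConnectedComponent, k ≤ c.supp.ncard)
      ≤ ∑ F ∈ G.edgeFinset.powerset, ∑ v : V, ∑ W ∈ Ω, (if Cnd v W F then wt F else 0) := step1
    _ = ∑ v : V, ∑ W ∈ Ω, ∑ F ∈ G.edgeFinset.powerset, (if Cnd v W F then wt F else 0) := step2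
    _ ≤ (Fintype.card V : ℝ) * (((d * m).choose m : ℝ) * p ^ m) := step4
    _ ≤ (Fintype.card V : ℝ) * (Real.exp 1 * (d : ℝ) * p) ^ m := step5
end

section
/- For ε > 0 let y(ε) denote the unique solution in (0,1) of y = 1 − exp(−(1+ε)y). Then the function ε ↦ y(ε) is strictly increasing on (0,∞), and there exist ε₀ > 0 and K > 0 such that for every ε ∈ (0, ε₀) one has |y(ε) − 2ε| ≤ K·ε². -/
private lemma log_deriv_aux {x : ℝ} (hx : x < 1) :
    HasDerivAt (fun t : ℝ => Real.log (1 - t)) (-(1 - x)⁻¹) x := by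
  have h1 : HasDerivAt (fun t : ℝ => 1 - t) (-1) x := by
    simpa using (hasDerivAt_id x).const_sub 1
  have h2 := (Real.hasDerivAt_log (by intro h; linarith [sub_eq_zero.1 h] : (1:ℝ) - x ≠ 0)).comp x h1
  refine h2.congr_deriv ?_
  ring

private lemma key_ineq {x : ℝ} (h0 : 0 < x) (h1 : x < 1) :
    0 < x / (1 - x) + Real.log (1 - x) := by
  have ht : 0 < 1 - x := by linarith
  have hne : (1 - x)⁻¹ ≠ 1 := by
    rw [Ne, inv_eq_one]
    intro h; linarith
  have hlt := Real.log_lt_sub_one_of_pos (inv_pos.2 ht) hne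
  rw [Real.log_inv] at hlt
  have he : (1 - x)⁻¹ - 1 = x / (1 - x) := by field_simp; ring
  linarith

private lemma hfun_mono : StrictMonoOn (fun t : ℝ => -Real.log (1 - t) / t) (Set.Ioo 0 1) := by
  have hd : ∀ x ∈ Set.Ioo (0:ℝ) 1,
      HasDerivAt (fun t : ℝ => -Real.log (1 - t) / t)
        ((x / (1 - x) + Real.log (1 - x)) / x ^ 2) x := by
    intro x hx
    have h1x : (1:ℝ) - x ≠ 0 := by have := hx.2; intro h; linarith
    have h := ((log_deriv_aux hx.2).neg.div (hasDerivAt_id x) hx.1.ne')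
    refine h.congr_deriv ?_
    simp only [id, Pi.neg_apply]
    field_simp
    ring
  apply strictMonoOn_of_deriv_pos (convex_Ioo 0 1)
  · exact fun x hx => ((hd x hx).continuousAt).continuousWithinAt
  · intro x hx
    rw [interior_Ioo] at hx
    rw [(hd x hx).deriv]
    exact div_pos (key_ineq hx.1 hx.2) (pow_pos hx.1 2)

private lemma log_lower {x : ℝ} (h0 : 0 < x) (h1 : x < 1) :
    x + x ^ 2 / 2 ≤ -Real.log (1 - x) := by
  have hd : ∀ t ∈ Set.Ico (0:ℝ) 1,
      HasDerivAt (fun s : ℝ => -Real.log (1 - s) - s - s ^ 2 / 2) ((1 - t)⁻¹ - 1 - t) t := by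
    intro t ht
    have hl := (log_deriv_aux ht.2).neg
    have h2 : HasDerivAt (fun s : ℝ => s ^ 2 / 2) t t := by
      have := (hasDerivAt_pow 2 t).div_const 2
      refine this.congr_deriv ?_
      ring
    have := (hl.sub (hasDerivAt_id t)).sub h2
    refine this.congr_deriv ?_
    ring
  have hm : StrictMonoOn (fun s : ℝ => -Real.log (1 - s) - s - s ^ 2 / 2) (Set.Ico 0 1) := by
    apply strictMonoOn_of_deriv_pos (convex_Ico 0 1)
    · exact fun t ht => ((hd t ht).continuousAt).continuousWithinAt
    · intro t ht
      rw [interior_Ico] at ht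
      rw [(hd t ⟨le_of_lt ht.1, ht.2⟩).deriv]
      have hs : 0 < 1 - t := by linarith [ht.2]
      have he : (1 - t)⁻¹ - 1 - t = t ^ 2 / (1 - t) := by field_simp; ring
      rw [he]
      exact div_pos (pow_pos ht.1 2) hs
  have := hm (Set.mem_Ico.2 ⟨le_refl 0, one_pos⟩) (Set.mem_Ico.2 ⟨h0.le, h1⟩) h0
  simp at this
  linarith

private lemma log_upper {x : ℝ} (h0 : 0 < x) (h1 : x < 1) :
    -Real.log (1 - x) ≤ x + x ^ 2 / (2 * (1 - x)) := by
  have hd : ∀ t ∈ Set.Ico (0:ℝ) 1,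
      HasDerivAt (fun s : ℝ => s ^ 2 / (2 * (1 - s)) + Real.log (1 - s) + s)
        (t ^ 2 / (2 * (1 - t) ^ 2)) t := by
    intro t ht
    have hs : 0 < 1 - t := by linarith [ht.2]
    have hg : HasDerivAt (fun s : ℝ => 2 * (1 - s)) (-2) t := by
      have : HasDerivAt (fun s : ℝ => 1 - s) (-1) t := by
        simpa using (hasDerivAt_id t).const_sub 1
      refine (this.const_mul 2).congr_deriv ?_
      ring
    have hdiv := (hasDerivAt_pow 2 t).div hg (by positivity : (2:ℝ) * (1 - t) ≠ 0)
    have := (hdiv.add (log_deriv_aux ht.2)).add (hasDerivAt_id t)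
    refine this.congr_deriv ?_
    field_simp
    ring
  have hm : StrictMonoOn (fun s : ℝ => s ^ 2 / (2 * (1 - s)) + Real.log (1 - s) + s)
      (Set.Ico 0 1) := by
    apply strictMonoOn_of_deriv_pos (convex_Ico 0 1)
    · exact fun t ht => ((hd t ht).continuousAt).continuousWithinAt
    · intro t ht
      rw [interior_Ico] at ht
      rw [(hd t ⟨le_of_lt ht.1, ht.2⟩).deriv]
      have hs : 0 < 1 - t := by linarith [ht.2]
      exact div_pos (pow_pos ht.1 2) (by positivity)
  have := hm (Set.mem_Ico.2 ⟨le_refl 0, one_pos⟩) (Set.mem_Ico.2 ⟨h0.le, h1⟩) h0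
  simp at this
  linarith

theorem survival_probability_monotone_and_asymptotics (y : ℝ → ℝ)
    -- `y ε` is the unique solution in `(0,1)` of `y = 1 - exp (-(1+ε) y)`
    (hy : ∀ ε : ℝ, 0 < ε →
      0 < y ε ∧ y ε < 1 ∧ y ε = 1 - Real.exp (-(1 + ε) * y ε)) :
    StrictMonoOn y (Set.Ioi (0 : ℝ)) ∧
      ∃ ε₀ : ℝ, 0 < ε₀ ∧ ∃ K : ℝ, 0 < K ∧
        ∀ ε : ℝ, 0 < ε → ε < ε₀ → |y ε - 2 * ε| ≤ K * ε ^ 2 := by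
  -- From the fixed-point equation: -log(1 - y ε) = (1+ε) * y ε
  have hkey : ∀ ε : ℝ, 0 < ε → -Real.log (1 - y ε) = (1 + ε) * y ε := by
    intro ε hε
    obtain ⟨h0, h1, heq⟩ := hy ε hε
    have hexp : Real.exp (-(1 + ε) * y ε) = 1 - y ε := by linarith
    have := Real.log_exp (-(1 + ε) * y ε)
    rw [hexp] at this
    linarith [this]
  have hval : ∀ ε : ℝ, 0 < ε → (fun t : ℝ => -Real.log (1 - t) / t) (y ε) = 1 + ε := by
    intro ε hε
    obtain ⟨h0, h1, _⟩ := hy ε hε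
    simp only
    rw [hkey ε hε, mul_div_assoc, div_self h0.ne', mul_one]
  constructor
  · -- monotonicity
    intro a ha b hb hab
    have ha' : (0:ℝ) < a := ha
    have hb' : (0:ℝ) < b := hb
    obtain ⟨ha0, ha1, _⟩ := hy a ha'
    obtain ⟨hb0, hb1, _⟩ := hy b hb'
    rcases lt_trichotomy (y a) (y b) with h | h | h
    · exact h
    · exfalso
      have := hval a ha'
      rw [h, hval b hb'] at this
      linarith
    · exfalso
      have := hfun_mono (Set.mem_Ioo.2 ⟨hb0, hb1⟩) (Set.mem_Ioo.2 ⟨ha0, ha1⟩) h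
      rw [hval a ha', hval b hb'] at this
      linarith
  · -- asymptotics
    refine ⟨1, one_pos, 4, by norm_num, ?_⟩
    intro ε hε hε1
    obtain ⟨h0, h1, _⟩ := hy ε hε
    have hk := hkey ε hε
    have hlow := log_lower h0 h1
    have hup := log_upper h0 h1
    have hs : 0 < 1 - y ε := by linarith
    -- y ε ≤ 2 ε
    have hle : y ε ≤ 2 * ε := by
      rw [hk] at hlow
      nlinarith
    -- 2 ε - y ε ≤ 4 ε ^ 2
    have hge : 2 * ε - y ε ≤ 4 * ε ^ 2 := by
      rw [hk] at hup
      -- (1+ε) y ≤ y + y²/(2(1-y))  ⇒  ε ≤ y/(2(1-y))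
      have h2 : ε * y ε ≤ y ε ^ 2 / (2 * (1 - y ε)) := by linarith
      have h3 : ε * y ε * (2 * (1 - y ε)) ≤ y ε ^ 2 :=
        (le_div_iff₀ (by positivity)).1 h2
      nlinarith [hle, hε, h0]
    rw [abs_le]
    constructor <;> nlinarith [sq_nonneg ε]
end
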